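/- arXiv:2306.11312 — 3 statements merged into one kernel-verified Lean document; each statement's English description precedes it below -/
import Mathlib

section
/- There exists a constant c > 0 such that for every sufficiently large n there exist probability distributions p, q on [n] with ||p - q||_1 = 1 with the following property: for every function s : ℕ → ℕ with s(n)/n → 0 as n → ∞, there exists n_0 such that for all n ≥ n_0, if p̂ is the empirical distribution obtained from s(n) i.i.d. samples from p, then the probability that ||p - p̂||_2 > ||q - p̂||_2 is at least c. -/
open MeasureTheory ProbabilityTheory Finset

/-- `p` is a probability distribution on `[n]` (nonnegative entries summing to `1`). -/
def IsDist {n : ℕ} (p : Fin n → ℝ) : Prop := (∀ i, 0 ≤ p i) ∧ ∑ i, p i = 1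

/-- The empirical distribution of the samples `X 0 ω, …, X (s-1) ω`: the fraction of the
`s` samples equal to `i`. -/
noncomputable def empirical {Ω : Type} {n s : ℕ} (X : Fin s → Ω → Fin n) (ω : Ω)
    (i : Fin n) : ℝ :=
  ((Finset.univ.filter fun j => X j ω = i).card : ℝ) / s

/-- `X` is a family of i.i.d. samples from the distribution `p` on `[n]`, defined on the
probability space `(Ω, μ)`. -/
def IIDSamples {Ω : Type} [MeasurableSpace Ω] {n s : ℕ} (μ : Measure Ω)
    (p : Fin n → ℝ) (X : Fin s → Ω → Fin n) : Prop :=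
  (∀ j, Measurable (X j)) ∧ iIndepFun X μ ∧
    ∀ j i, μ {ω | X j ω = i} = ENNReal.ofReal (p i)

namespace L2Aux

/-- perturbation size -/
noncomputable def aa (n : ℕ) : ℝ := 1 / (8 * Real.sqrt n)
/-- block size -/
def KK (n : ℕ) : ℕ := (n - 2) / 2
noncomputable def cc (n : ℕ) : ℝ := (1 - 2 * aa n) / (2 * (KK n : ℝ))
noncomputable def UU (n : ℕ) : ℝ := (3 / 4) / (KK n : ℝ)

noncomputable def FP (n : ℕ) (v : ℕ) : ℝ :=
  if v = 0 then 1/8 else if v = 1 then 1/8 else if v < 2 + KK n then UU n else 0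

noncomputable def FQ (n : ℕ) (v : ℕ) : ℝ :=
  if v = 0 then 1/8 + aa n else if v = 1 then 1/8 - aa n
  else if v < 2 + KK n then UU n - cc n
  else if v < 2 + 2 * KK n then cc n else 0

noncomputable def pp (n : ℕ) (i : Fin n) : ℝ := FP n i.val
noncomputable def qq (n : ℕ) (i : Fin n) : ℝ := FQ n i.val

lemma sqrtn_ge (n : ℕ) (hn : 100 ≤ n) : 10 ≤ Real.sqrt n := by
  have : Real.sqrt 100 ≤ Real.sqrt n := Real.sqrt_le_sqrt (by exact_mod_cast hn)
  calc (10:ℝ) = Real.sqrt 100 := by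
        rw [show (100:ℝ) = 10 ^ 2 by norm_num, Real.sqrt_sq (by norm_num)]
    _ ≤ _ := this

lemma sqrtn_pos (n : ℕ) (hn : 100 ≤ n) : 0 < Real.sqrt n := by
  have := sqrtn_ge n hn; linarith

lemma sq_sqrtn (n : ℕ) : Real.sqrt n * Real.sqrt n = n :=
  Real.mul_self_sqrt (Nat.cast_nonneg n)

lemma aa_pos (n : ℕ) (hn : 100 ≤ n) : 0 < aa n := by
  have := sqrtn_pos n hn
  unfold aa; positivity

lemma aa_le (n : ℕ) (hn : 100 ≤ n) : aa n ≤ 1/80 := by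
  have h := sqrtn_ge n hn
  unfold aa
  rw [div_le_div_iff₀ (by linarith) (by norm_num)]
  linarith

lemma aa_sq (n : ℕ) (hn : 100 ≤ n) : aa n ^ 2 = 1 / (64 * n) := by
  have h := sq_sqrtn n
  have h2 := sqrtn_pos n hn
  unfold aa
  field_simp
  nlinarith [h]

lemma KK_ge (n : ℕ) (hn : 100 ≤ n) : n ≤ 2 * KK n + 3 := by unfold KK; omega
lemma KK_le (n : ℕ) (hn : 100 ≤ n) : 2 + 2 * KK n ≤ n := by unfold KK; omega
lemma KK_pos (n : ℕ) (hn : 100 ≤ n) : 1 ≤ KK n := by unfold KK; omega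

lemma KK_real_pos (n : ℕ) (hn : 100 ≤ n) : (0:ℝ) < (KK n : ℝ) := by
  exact_mod_cast KK_pos n hn

lemma KK_real_ge (n : ℕ) (hn : 100 ≤ n) : (n:ℝ)/4 ≤ (KK n : ℝ) := by
  have h := KK_ge n hn
  have : (n:ℝ) ≤ 2 * (KK n:ℝ) + 3 := by exact_mod_cast h
  have hn' : (100:ℝ) ≤ n := by exact_mod_cast hn
  linarith

lemma KK_real_le (n : ℕ) (hn : 100 ≤ n) : 2 * (KK n : ℝ) ≤ (n:ℝ) := by
  have h := KK_le n hn
  have : (2:ℝ) + 2 * (KK n:ℝ) ≤ n := by exact_mod_cast h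
  linarith

lemma cc_nonneg (n : ℕ) (hn : 100 ≤ n) : 0 ≤ cc n := by
  have h1 := aa_le n hn
  have h2 := KK_real_pos n hn
  unfold cc; apply div_nonneg (by linarith) (by linarith)
lemma cc_le (n : ℕ) (hn : 100 ≤ n) : cc n ≤ 1 / (2 * (KK n : ℝ)) := by
  have h2 := KK_real_pos n hn
  have h1 := aa_pos n hn
  unfold cc
  apply div_le_div_of_nonneg_right ?_ (by linarith)
  linarith

lemma sum_split (n : ℕ) (hn : 100 ≤ n) (f : ℕ → ℝ) :
    ∑ i : Fin n, f i.val =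
      f 0 + f 1 + (∑ v ∈ Finset.Ico 2 (2 + KK n), f v
        + (∑ v ∈ Finset.Ico (2 + KK n) (2 + 2*KK n), f v
        + ∑ v ∈ Finset.Ico (2 + 2*KK n) n, f v)) := by
  have h1 : (2:ℕ) ≤ 2 + KK n := by omega
  have h2 : 2 + KK n ≤ 2 + 2*KK n := by omega
  have h3 : 2 + 2*KK n ≤ n := KK_le n hn
  rw [Fin.sum_univ_eq_sum_range, Finset.range_eq_Ico]
  rw [← Finset.sum_Ico_consecutive f (show 0 ≤ 2 by omega) (h1.trans (h2.trans h3))]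
  rw [← Finset.sum_Ico_consecutive f h1 (h2.trans h3)]
  rw [← Finset.sum_Ico_consecutive f h2 h3]
  have h02 : ∑ v ∈ Finset.Ico 0 2, f v = f 0 + f 1 := by
    rw [← Finset.range_eq_Ico, Finset.sum_range_succ, Finset.sum_range_one]
  rw [h02]

lemma sum_const_Ico (a b : ℕ) (f : ℕ → ℝ) (C : ℝ) (h : ∀ v, a ≤ v → v < b → f v = C) :
    ∑ v ∈ Finset.Ico a b, f v = (b - a : ℕ) * C := by
  have e : ∑ v ∈ Finset.Ico a b, f v = ∑ _v ∈ Finset.Ico a b, C :=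
    Finset.sum_congr rfl (fun v hv => by
      rw [Finset.mem_Ico] at hv; exact h v hv.1 hv.2)
  rw [e, Finset.sum_const, Nat.card_Ico, nsmul_eq_mul]

lemma card1 (n : ℕ) : ((2 + KK n - 2 : ℕ) : ℝ) = (KK n : ℝ) := by norm_num
lemma card2 (n : ℕ) : ((2 + 2*KK n - (2 + KK n) : ℕ) : ℝ) = (KK n : ℝ) := by
  congr 1; omega

lemma sum_pp (n : ℕ) (hn : 100 ≤ n) : ∑ i : Fin n, pp n i = 1 := by
  have hK := KK_real_pos n hn
  have : ∑ i : Fin n, pp n i = ∑ i : Fin n, FP n i.val := rfl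
  rw [this, sum_split n hn]
  rw [sum_const_Ico 2 (2 + KK n) _ (UU n)
    (fun v h1 h2 => by unfold FP; rw [if_neg (by omega), if_neg (by omega), if_pos h2])]
  rw [sum_const_Ico (2 + KK n) (2 + 2*KK n) _ 0
    (fun v h1 h2 => by unfold FP; rw [if_neg (by omega), if_neg (by omega), if_neg (by omega)])]
  rw [sum_const_Ico (2 + 2*KK n) n _ 0
    (fun v h1 h2 => by unfold FP; rw [if_neg (by omega), if_neg (by omega), if_neg (by omega)])]
  rw [card1]
  have e0 : FP n 0 = 1/8 := by unfold FP; norm_num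
  have e1 : FP n 1 = 1/8 := by unfold FP; norm_num
  rw [e0, e1]
  unfold UU
  field_simp
  ring

lemma sum_qq (n : ℕ) (hn : 100 ≤ n) : ∑ i : Fin n, qq n i = 1 := by
  have hK := KK_real_pos n hn
  have : ∑ i : Fin n, qq n i = ∑ i : Fin n, FQ n i.val := rfl
  rw [this, sum_split n hn]
  rw [sum_const_Ico 2 (2 + KK n) _ (UU n - cc n)
    (fun v h1 h2 => by unfold FQ; rw [if_neg (by omega), if_neg (by omega), if_pos h2])]
  rw [sum_const_Ico (2 + KK n) (2 + 2*KK n) _ (cc n)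
    (fun v h1 h2 => by unfold FQ; rw [if_neg (by omega), if_neg (by omega), if_neg (by omega), if_pos h2])]
  rw [sum_const_Ico (2 + 2*KK n) n _ 0
    (fun v h1 h2 => by unfold FQ; rw [if_neg (by omega), if_neg (by omega), if_neg (by omega), if_neg (by omega)])]
  rw [card1, card2]
  have e0 : FQ n 0 = 1/8 + aa n := by unfold FQ; norm_num
  have e1 : FQ n 1 = 1/8 - aa n := by unfold FQ; norm_num
  rw [e0, e1]
  unfold UU cc
  field_simp
  ring

noncomputable def FD (n : ℕ) (v : ℕ) : ℝ := |FP n v - FQ n v|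

lemma sum_l1 (n : ℕ) (hn : 100 ≤ n) : ∑ i : Fin n, |pp n i - qq n i| = 1 := by
  have hK := KK_real_pos n hn
  have ha := aa_pos n hn
  have hc := cc_nonneg n hn
  have : ∑ i : Fin n, |pp n i - qq n i| = ∑ i : Fin n, FD n i.val := rfl
  rw [this, sum_split n hn]
  rw [sum_const_Ico 2 (2 + KK n) _ (cc n)
    (fun v h1 h2 => by
      unfold FD FP FQ
      rw [if_neg (by omega), if_neg (by omega), if_pos h2,
          if_neg (by omega), if_neg (by omega), if_pos h2]
      rw [show UU n - (UU n - cc n) = cc n by ring, abs_of_nonneg hc])]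
  rw [sum_const_Ico (2 + KK n) (2 + 2*KK n) _ (cc n)
    (fun v h1 h2 => by
      unfold FD FP FQ
      rw [if_neg (by omega), if_neg (by omega), if_neg (by omega),
          if_neg (by omega), if_neg (by omega), if_neg (by omega), if_pos h2]
      rw [zero_sub, abs_neg, abs_of_nonneg hc])]
  rw [sum_const_Ico (2 + 2*KK n) n _ 0
    (fun v h1 h2 => by
      unfold FD FP FQ
      rw [if_neg (by omega), if_neg (by omega), if_neg (by omega),
          if_neg (by omega), if_neg (by omega), if_neg (by omega), if_neg (by omega)]
      simp)]
  rw [card1, card2]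
  have e0 : FD n 0 = aa n := by
    unfold FD FP FQ; rw [if_pos rfl, if_pos rfl]
    rw [show (1:ℝ)/8 - (1/8 + aa n) = -aa n by ring, abs_neg, abs_of_nonneg ha.le]
  have e1 : FD n 1 = aa n := by
    unfold FD FP FQ
    rw [if_neg one_ne_zero, if_pos rfl, if_neg one_ne_zero, if_pos rfl]
    rw [show (1:ℝ)/8 - (1/8 - aa n) = aa n by ring, abs_of_nonneg ha.le]
  rw [e0, e1]
  unfold cc
  field_simp
  ring

lemma pp_nonneg (n : ℕ) (hn : 100 ≤ n) (i : Fin n) : 0 ≤ pp n i := by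
  have hK := KK_real_pos n hn
  unfold pp FP UU
  split_ifs <;> positivity

lemma UU_sub_cc (n : ℕ) (hn : 100 ≤ n) : UU n - cc n = (1/4 + aa n) / (KK n : ℝ) := by
  have hK := (KK_real_pos n hn).ne'
  unfold UU cc
  field_simp
  ring

lemma qq_nonneg (n : ℕ) (hn : 100 ≤ n) (i : Fin n) : 0 ≤ qq n i := by
  have hK := KK_real_pos n hn
  have ha := aa_pos n hn
  have ha2 := aa_le n hn
  have hc := cc_nonneg n hn
  have husc := UU_sub_cc n hn
  unfold qq FQ
  split_ifs with h1 h2 h3 h4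
  · linarith
  · linarith
  · rw [husc]; positivity
  · exact hc
  · exact le_refl 0
noncomputable def FB (n : ℕ) (v : ℕ) : ℝ := (FP n v - FQ n v) * (FP n v + FQ n v)

lemma sum_FB (n : ℕ) (hn : 100 ≤ n) :
    ∑ i : Fin n, FB n i.val
      = -2*(aa n)^2 + (1-2*aa n)*(1+4*aa n)/(4*(KK n:ℝ)) := by
  have hK := KK_real_pos n hn
  rw [sum_split n hn]
  rw [sum_const_Ico 2 (2 + KK n) _ (cc n * (2*UU n - cc n))
    (fun v h1 h2 => by
      unfold FB FP FQ
      rw [if_neg (by omega), if_neg (by omega), if_pos h2,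
          if_neg (by omega), if_neg (by omega), if_pos h2]
      ring)]
  rw [sum_const_Ico (2 + KK n) (2 + 2*KK n) _ (-(cc n * cc n))
    (fun v h1 h2 => by
      unfold FB FP FQ
      rw [if_neg (by omega), if_neg (by omega), if_neg (by omega),
          if_neg (by omega), if_neg (by omega), if_neg (by omega), if_pos h2]
      ring)]
  rw [sum_const_Ico (2 + 2*KK n) n _ 0
    (fun v h1 h2 => by
      unfold FB FP FQ
      rw [if_neg (by omega), if_neg (by omega), if_neg (by omega),
          if_neg (by omega), if_neg (by omega), if_neg (by omega), if_neg (by omega)]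
      ring)]
  rw [card1, card2]
  have e0 : FB n 0 = -(aa n) * (1/4 + aa n) := by
    unfold FB FP FQ; rw [if_pos rfl, if_pos rfl]; ring
  have e1 : FB n 1 = aa n * (1/4 - aa n) := by
    unfold FB FP FQ
    rw [if_neg one_ne_zero, if_pos rfl, if_neg one_ne_zero, if_pos rfl]; ring
  rw [e0, e1]
  unfold cc UU
  field_simp
  ring

lemma sq_diff_eq (n : ℕ) (hn : 100 ≤ n) (ph : Fin n → ℝ) :
    ∑ i : Fin n, (pp n i - ph i)^2 - ∑ i : Fin n, (qq n i - ph i)^2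
      = (-2*(aa n)^2 + (1-2*aa n)*(1+4*aa n)/(4*(KK n:ℝ)))
        - 2 * ∑ i : Fin n, (pp n i - qq n i) * ph i := by
  rw [← sum_FB n hn, ← Finset.sum_sub_distrib]
  have : ∀ i : Fin n, (pp n i - ph i)^2 - (qq n i - ph i)^2
      = FB n i.val - 2 * ((pp n i - qq n i) * ph i) := by
    intro i
    unfold FB pp qq
    ring
  rw [Finset.sum_congr rfl (fun i _ => this i), Finset.sum_sub_distrib, Finset.mul_sum]

lemma B_le (n : ℕ) (hn : 100 ≤ n) (ph : Fin n → ℝ) (hpos : ∀ i, 0 ≤ ph i)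
    (i0 i1 : Fin n) (h0 : i0.val = 0) (h1 : i1.val = 1) :
    ∑ i : Fin n, (pp n i - qq n i) * ph i
      ≤ cc n * (∑ i : Fin n, ph i)
          + ((-(aa n) - cc n) * ph i0 + (aa n - cc n) * ph i1) := by
  have hc := cc_nonneg n hn
  have ha := aa_pos n hn
  have step : ∑ i : Fin n, (pp n i - qq n i) * ph i
      ≤ ∑ i : Fin n, (cc n * ph i
          + ((if i = i0 then (-(aa n) - cc n) * ph i else 0)
            + (if i = i1 then (aa n - cc n) * ph i else 0))) := by
    apply Finset.sum_le_sum
    intro i _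
    have hph := hpos i
    have hq0 : (i = i0) ↔ (i.val = 0) := by rw [Fin.ext_iff, h0]
    have hq1 : (i = i1) ↔ (i.val = 1) := by rw [Fin.ext_iff, h1]
    unfold pp qq FP FQ
    simp only [hq0, hq1]
    split_ifs <;> first
      | (exfalso; omega)
      | nlinarith
  refine step.trans ?_
  rw [Finset.sum_add_distrib, Finset.sum_add_distrib, ← Finset.mul_sum,
      Finset.sum_ite_eq' Finset.univ i0, Finset.sum_ite_eq' Finset.univ i1]
  simp
lemma event_pos (n : ℕ) (hn : 100 ≤ n) (ph : Fin n → ℝ) (hpos : ∀ i, 0 ≤ ph i)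
    (hsum : ∑ i : Fin n, ph i ≤ 1)
    (i0 i1 : Fin n) (h0 : i0.val = 0) (h1 : i1.val = 1)
    (hD : 25 / Real.sqrt n ≤ ph i0 - ph i1) :
    ∑ i : Fin n, (qq n i - ph i)^2 < ∑ i : Fin n, (pp n i - ph i)^2 := by
  have key := sq_diff_eq n hn ph
  have hB := B_le n hn ph hpos i0 i1 h0 h1
  have ha := aa_pos n hn
  have hc := cc_nonneg n hn
  have hK := KK_real_pos n hn
  have hKge := KK_real_ge n hn
  have hn0 : (0:ℝ) < n := by positivity
  have hsqpos := sqrtn_pos n hn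
  have hp0 := hpos i0
  have hp1 := hpos i1
  have hBle : ∑ i : Fin n, (pp n i - qq n i) * ph i
      ≤ cc n - aa n * (ph i0 - ph i1) := by
    have h1' : cc n * (∑ i : Fin n, ph i) ≤ cc n * 1 :=
      mul_le_mul_of_nonneg_left hsum hc
    nlinarith [mul_nonneg hc hp0, mul_nonneg hc hp1]
  have haD : 25 / (8*(n:ℝ)) ≤ aa n * (ph i0 - ph i1) := by
    have e : aa n * (25 / Real.sqrt n) = 25/(8*(n:ℝ)) := by
      unfold aa
      rw [div_mul_div_comm, one_mul, div_eq_div_iff (by positivity) (by positivity)]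
      nlinarith [sq_sqrtn n]
    rw [← e]
    exact mul_le_mul_of_nonneg_left hD ha.le
  have hcle : cc n ≤ 2 / (n:ℝ) := by
    have h1' := cc_le n hn
    have h2' : 1/(2*(KK n:ℝ)) ≤ 2/(n:ℝ) := by
      rw [div_le_div_iff₀ (by positivity) hn0]
      linarith
    linarith
  have haa2 : aa n ^ 2 = 1/(64*(n:ℝ)) := aa_sq n hn
  have hAA : 0 ≤ (1-2*aa n)*(1+4*aa n)/(4*(KK n:ℝ)) := by
    have h80 := aa_le n hn
    apply div_nonneg (by nlinarith) (by positivity)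
  have eq71 : -2*(1/(64*(n:ℝ))) - 2*(2/(n:ℝ)) + 2*(25/(8*(n:ℝ))) = 71/(32*(n:ℝ)) := by
    field_simp
    ring
  have hfin : (0:ℝ) < 71/(32*(n:ℝ)) := by positivity
  have final : 0 < ∑ i : Fin n, (pp n i - ph i)^2 - ∑ i : Fin n, (qq n i - ph i)^2 := by
    rw [key, haa2]
    linarith
  linarith

lemma event_zero (n : ℕ) (hn : 100 ≤ n) :
    ∑ i : Fin n, (qq n i - 0)^2 < ∑ i : Fin n, (pp n i - 0)^2 := by
  have key := sq_diff_eq n hn (fun _ => 0)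
  have ha := aa_pos n hn
  have h80 := aa_le n hn
  have hK := KK_real_pos n hn
  have hKle := KK_real_le n hn
  have hn0 : (0:ℝ) < n := by positivity
  have haa2 : aa n ^ 2 = 1/(64*(n:ℝ)) := aa_sq n hn
  have hz : ∑ i : Fin n, (pp n i - qq n i) * (fun _ : Fin n => (0:ℝ)) i = 0 := by
    simp
  have hAA : (1-2*aa n)*(1+4*aa n)/(4*(KK n:ℝ)) ≥ (39/80)/(2*(n:ℝ)) := by
    rw [ge_iff_le, div_le_div_iff₀ (by positivity) (by positivity)]
    have hq : (39:ℝ)/40 ≤ (1-2*aa n)*(1+4*aa n) := by nlinarith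
    have hq2 : (39/40)*(2*(n:ℝ)) ≤ (1-2*aa n)*(1+4*aa n)*(2*(n:ℝ)) := by nlinarith
    linarith
  have e2 : -2*(1/(64*(n:ℝ))) + (39/80)/(2*(n:ℝ)) = 17/(80*(n:ℝ)) := by
    field_simp
    ring
  have hfin : (0:ℝ) < 17/(80*(n:ℝ)) := by positivity
  have final : 0 < ∑ i : Fin n, (pp n i - (fun _ : Fin n => (0:ℝ)) i)^2
      - ∑ i : Fin n, (qq n i - (fun _ : Fin n => (0:ℝ)) i)^2 := by
    rw [key, hz, haa2]
    linarith
  simpa using final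
section Prob
variable {Ω : Type} [MeasurableSpace Ω] (μ : Measure Ω) [IsProbabilityMeasure μ]

lemma integrable_of_bound (f : Ω → ℝ) (hf : Measurable f) (C : ℝ) (h : ∀ ω, |f ω| ≤ C) :
    Integrable f μ :=
  (integrable_const C).mono' hf.aestronglyMeasurable
    (Filter.Eventually.of_forall (by simpa [Real.norm_eq_abs] using h))

lemma expand_moments (T Z : Ω → ℝ) (hTm : Measurable T) (hZm : Measurable Z)
    (CT : ℝ) (hTbd : ∀ ω, |T ω| ≤ CT) (hZbd : ∀ ω, |Z ω| ≤ 1)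
    (hI : IndepFun T Z μ) :
    (∫ ω, (Z ω + T ω) ∂μ = (∫ ω, Z ω ∂μ) + (∫ ω, T ω ∂μ))
  ∧ (∫ ω, (Z ω + T ω)^2 ∂μ = (∫ ω, (T ω)^2 ∂μ) + 2*(∫ ω, T ω ∂μ)*(∫ ω, Z ω ∂μ)
        + (∫ ω, (Z ω)^2 ∂μ))
  ∧ (∫ ω, (Z ω + T ω)^3 ∂μ = (∫ ω, (T ω)^3 ∂μ) + 3*(∫ ω, (T ω)^2 ∂μ)*(∫ ω, Z ω ∂μ)
        + 3*(∫ ω, T ω ∂μ)*(∫ ω, (Z ω)^2 ∂μ) + (∫ ω, (Z ω)^3 ∂μ))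
  ∧ (∫ ω, (Z ω + T ω)^4 ∂μ = (∫ ω, (T ω)^4 ∂μ) + 4*(∫ ω, (T ω)^3 ∂μ)*(∫ ω, Z ω ∂μ)
        + 6*(∫ ω, (T ω)^2 ∂μ)*(∫ ω, (Z ω)^2 ∂μ) + 4*(∫ ω, T ω ∂μ)*(∫ ω, (Z ω)^3 ∂μ)
        + (∫ ω, (Z ω)^4 ∂μ)) := by
  have intprod : ∀ k l : ℕ, Integrable (fun ω => (T ω)^k * (Z ω)^l) μ := by
    intro k l
    apply integrable_of_bound μ (fun ω => (T ω)^k * (Z ω)^l) ((hTm.pow_const k).mul (hZm.pow_const l)) (|CT|^k)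
    intro ω
    rw [abs_mul, abs_pow, abs_pow]
    have h1' : |T ω|^k ≤ |CT|^k :=
      pow_le_pow_left₀ (abs_nonneg _) ((hTbd ω).trans (le_abs_self CT)) k
    have h2' : |Z ω|^l ≤ 1 := pow_le_one₀ (abs_nonneg _) (hZbd ω)
    calc |T ω|^k * |Z ω|^l ≤ |CT|^k * 1 :=
          mul_le_mul h1' h2' (by positivity) (by positivity)
      _ = |CT|^k := mul_one _
  have cross : ∀ k l : ℕ, ∫ ω, (T ω)^k * (Z ω)^l ∂μ
      = (∫ ω, (T ω)^k ∂μ) * (∫ ω, (Z ω)^l ∂μ) := by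
    intro k l
    have hIkl : IndepFun (fun ω => (T ω)^k) (fun ω => (Z ω)^l) μ := by
      have := hI.comp (measurable_id.pow_const k) (measurable_id.pow_const l)
      simpa [Function.comp_def] using this
    have hres := hIkl.integral_mul_eq_mul_integral
      (hTm.pow_const k).aestronglyMeasurable (hZm.pow_const l).aestronglyMeasurable
    simpa using hres
  have intT : Integrable T μ := by simpa using intprod 1 0
  have intZ : Integrable Z μ := by simpa using intprod 0 1
  have intT2 : Integrable (fun ω => (T ω)^2) μ := by simpa using intprod 2 0
  have intZ2 : Integrable (fun ω => (Z ω)^2) μ := by simpa using intprod 0 2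
  have intT3 : Integrable (fun ω => (T ω)^3) μ := by simpa using intprod 3 0
  have intZ3 : Integrable (fun ω => (Z ω)^3) μ := by simpa using intprod 0 3
  have intT4 : Integrable (fun ω => (T ω)^4) μ := by simpa using intprod 4 0
  have intZ4 : Integrable (fun ω => (Z ω)^4) μ := by simpa using intprod 0 4
  have intTZ : Integrable (fun ω => (T ω)*(Z ω)) μ := by simpa using intprod 1 1
  have intT2Z : Integrable (fun ω => (T ω)^2*(Z ω)) μ := by simpa using intprod 2 1
  have intTZ2 : Integrable (fun ω => (T ω)*(Z ω)^2) μ := by simpa using intprod 1 2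
  have intT3Z : Integrable (fun ω => (T ω)^3*(Z ω)) μ := by simpa using intprod 3 1
  have intT2Z2 : Integrable (fun ω => (T ω)^2*(Z ω)^2) μ := by simpa using intprod 2 2
  have intTZ3 : Integrable (fun ω => (T ω)*(Z ω)^3) μ := by simpa using intprod 1 3
  have cTZ : ∫ ω, (T ω)*(Z ω) ∂μ = (∫ ω, T ω ∂μ) * (∫ ω, Z ω ∂μ) := by
    simpa using cross 1 1
  have cT2Z : ∫ ω, (T ω)^2*(Z ω) ∂μ = (∫ ω, (T ω)^2 ∂μ) * (∫ ω, Z ω ∂μ) := by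
    simpa using cross 2 1
  have cTZ2 : ∫ ω, (T ω)*(Z ω)^2 ∂μ = (∫ ω, T ω ∂μ) * (∫ ω, (Z ω)^2 ∂μ) := by
    simpa using cross 1 2
  have cT3Z : ∫ ω, (T ω)^3*(Z ω) ∂μ = (∫ ω, (T ω)^3 ∂μ) * (∫ ω, Z ω ∂μ) := by
    simpa using cross 3 1
  have cT2Z2 : ∫ ω, (T ω)^2*(Z ω)^2 ∂μ = (∫ ω, (T ω)^2 ∂μ) * (∫ ω, (Z ω)^2 ∂μ) := by
    simpa using cross 2 2
  have cTZ3 : ∫ ω, (T ω)*(Z ω)^3 ∂μ = (∫ ω, T ω ∂μ) * (∫ ω, (Z ω)^3 ∂μ) := by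
    simpa using cross 1 3
  refine ⟨?_, ?_, ?_, ?_⟩
  · exact integral_add intZ intT
  · have e2 : (fun ω => (Z ω + T ω)^2)
        = fun ω => (T ω)^2 + (2*((T ω)*(Z ω)) + (Z ω)^2) := by
      funext ω; ring
    have s1 : ∫ ω, ((T ω)^2 + (2*((T ω)*(Z ω)) + (Z ω)^2)) ∂μ
        = (∫ ω, (T ω)^2 ∂μ) + ∫ ω, (2*((T ω)*(Z ω)) + (Z ω)^2) ∂μ :=
      integral_add intT2 ((intTZ.const_mul 2).add intZ2)
    have s2 : ∫ ω, (2*((T ω)*(Z ω)) + (Z ω)^2) ∂μ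
        = (∫ ω, 2*((T ω)*(Z ω)) ∂μ) + ∫ ω, (Z ω)^2 ∂μ :=
      integral_add (intTZ.const_mul 2) intZ2
    have s3 : ∫ ω, 2*((T ω)*(Z ω)) ∂μ = 2 * ∫ ω, (T ω)*(Z ω) ∂μ := integral_const_mul 2 _
    rw [e2, s1, s2, s3, cTZ]; ring
  · have e3 : (fun ω => (Z ω + T ω)^3)
        = fun ω => (T ω)^3 + (3*((T ω)^2*(Z ω)) + (3*((T ω)*(Z ω)^2) + (Z ω)^3)) := by
      funext ω; ring
    have s1 : ∫ ω, ((T ω)^3 + (3*((T ω)^2*(Z ω)) + (3*((T ω)*(Z ω)^2) + (Z ω)^3))) ∂μ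
        = (∫ ω, (T ω)^3 ∂μ) + ∫ ω, (3*((T ω)^2*(Z ω)) + (3*((T ω)*(Z ω)^2) + (Z ω)^3)) ∂μ :=
      integral_add intT3 ((intT2Z.const_mul 3).add ((intTZ2.const_mul 3).add intZ3))
    have s2 : ∫ ω, (3*((T ω)^2*(Z ω)) + (3*((T ω)*(Z ω)^2) + (Z ω)^3)) ∂μ
        = (∫ ω, 3*((T ω)^2*(Z ω)) ∂μ) + ∫ ω, (3*((T ω)*(Z ω)^2) + (Z ω)^3) ∂μ :=
      integral_add (intT2Z.const_mul 3) ((intTZ2.const_mul 3).add intZ3)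
    have s3 : ∫ ω, (3*((T ω)*(Z ω)^2) + (Z ω)^3) ∂μ
        = (∫ ω, 3*((T ω)*(Z ω)^2) ∂μ) + ∫ ω, (Z ω)^3 ∂μ :=
      integral_add (intTZ2.const_mul 3) intZ3
    have s4 : ∫ ω, 3*((T ω)^2*(Z ω)) ∂μ = 3 * ∫ ω, (T ω)^2*(Z ω) ∂μ := integral_const_mul 3 _
    have s5 : ∫ ω, 3*((T ω)*(Z ω)^2) ∂μ = 3 * ∫ ω, (T ω)*(Z ω)^2 ∂μ := integral_const_mul 3 _
    rw [e3, s1, s2, s3, s4, s5, cT2Z, cTZ2]; ring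
  · have e4 : (fun ω => (Z ω + T ω)^4)
        = fun ω => (T ω)^4 + (4*((T ω)^3*(Z ω)) + (6*((T ω)^2*(Z ω)^2)
            + (4*((T ω)*(Z ω)^3) + (Z ω)^4))) := by
      funext ω; ring
    have s1 : ∫ ω, ((T ω)^4 + (4*((T ω)^3*(Z ω)) + (6*((T ω)^2*(Z ω)^2)
            + (4*((T ω)*(Z ω)^3) + (Z ω)^4)))) ∂μ
        = (∫ ω, (T ω)^4 ∂μ) + ∫ ω, (4*((T ω)^3*(Z ω)) + (6*((T ω)^2*(Z ω)^2)
            + (4*((T ω)*(Z ω)^3) + (Z ω)^4))) ∂μ :=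
      integral_add intT4 ((intT3Z.const_mul 4).add ((intT2Z2.const_mul 6).add
        ((intTZ3.const_mul 4).add intZ4)))
    have s2 : ∫ ω, (4*((T ω)^3*(Z ω)) + (6*((T ω)^2*(Z ω)^2)
            + (4*((T ω)*(Z ω)^3) + (Z ω)^4))) ∂μ
        = (∫ ω, 4*((T ω)^3*(Z ω)) ∂μ) + ∫ ω, (6*((T ω)^2*(Z ω)^2)
            + (4*((T ω)*(Z ω)^3) + (Z ω)^4)) ∂μ :=
      integral_add (intT3Z.const_mul 4) ((intT2Z2.const_mul 6).add
        ((intTZ3.const_mul 4).add intZ4))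
    have s3 : ∫ ω, (6*((T ω)^2*(Z ω)^2) + (4*((T ω)*(Z ω)^3) + (Z ω)^4)) ∂μ
        = (∫ ω, 6*((T ω)^2*(Z ω)^2) ∂μ) + ∫ ω, (4*((T ω)*(Z ω)^3) + (Z ω)^4) ∂μ :=
      integral_add (intT2Z2.const_mul 6) ((intTZ3.const_mul 4).add intZ4)
    have s4 : ∫ ω, (4*((T ω)*(Z ω)^3) + (Z ω)^4) ∂μ
        = (∫ ω, 4*((T ω)*(Z ω)^3) ∂μ) + ∫ ω, (Z ω)^4 ∂μ :=
      integral_add (intTZ3.const_mul 4) intZ4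
    have s5 : ∫ ω, 4*((T ω)^3*(Z ω)) ∂μ = 4 * ∫ ω, (T ω)^3*(Z ω) ∂μ := integral_const_mul 4 _
    have s6 : ∫ ω, 6*((T ω)^2*(Z ω)^2) ∂μ = 6 * ∫ ω, (T ω)^2*(Z ω)^2 ∂μ := integral_const_mul 6 _
    have s7 : ∫ ω, 4*((T ω)*(Z ω)^3) ∂μ = 4 * ∫ ω, (T ω)*(Z ω)^3 ∂μ := integral_const_mul 4 _
    rw [e4, s1, s2, s3, s4, s5, s6, s7, cT3Z, cT2Z2, cTZ3]; ring

end Prob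
section Prob2
variable {Ω : Type} [MeasurableSpace Ω] (μ : Measure Ω) [IsProbabilityMeasure μ]

lemma sum_moments {s : ℕ} (Y : Fin s → Ω → ℝ)
    (hmeas : ∀ j, Measurable (Y j)) (hbd : ∀ j ω, |Y j ω| ≤ 1)
    (hind : iIndepFun Y μ)
    (h1 : ∀ j, ∫ ω, Y j ω ∂μ = 0) (h2 : ∀ j, ∫ ω, (Y j ω)^2 ∂μ = 1/4)
    (h3 : ∀ j, ∫ ω, (Y j ω)^3 ∂μ = 0) (h4 : ∀ j, ∫ ω, (Y j ω)^4 ∂μ = 1/4)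
    (F : Finset (Fin s)) :
    (∫ ω, (∑ j ∈ F, Y j ω) ∂μ = 0) ∧
    (∫ ω, (∑ j ∈ F, Y j ω)^2 ∂μ = (F.card : ℝ)/4) ∧
    (∫ ω, (∑ j ∈ F, Y j ω)^3 ∂μ = 0) ∧
    (∫ ω, (∑ j ∈ F, Y j ω)^4 ∂μ
      = (F.card:ℝ)/4 + 3*(F.card:ℝ)*((F.card:ℝ) - 1)/16) := by
  induction F using Finset.induction_on with
  | empty => simp
  | @insert a F ha IH =>
    obtain ⟨IH1, IH2, IH3, IH4⟩ := IH
    have hTm : Measurable (fun ω => ∑ j ∈ F, Y j ω) :=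
      Finset.measurable_sum F (fun j _ => hmeas j)
    have hTbd : ∀ ω, |∑ j ∈ F, Y j ω| ≤ (F.card : ℝ) := by
      intro ω
      calc |∑ j ∈ F, Y j ω| ≤ ∑ j ∈ F, |Y j ω| := Finset.abs_sum_le_sum_abs _ _
        _ ≤ ∑ _j ∈ F, (1:ℝ) := Finset.sum_le_sum (fun j _ => hbd j ω)
        _ = F.card := by simp
    have hI : IndepFun (fun ω => ∑ j ∈ F, Y j ω) (Y a) μ := by
      have h := hind.indepFun_finset_sum_of_notMem hmeas ha
      have e : (fun ω => ∑ j ∈ F, Y j ω) = ∑ j ∈ F, Y j := by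
        funext ω; rw [Finset.sum_apply]
      rw [e]; exact h
    obtain ⟨E1, E2, E3, E4⟩ := expand_moments μ (fun ω => ∑ j ∈ F, Y j ω) (Y a)
      hTm (hmeas a) (F.card:ℝ) hTbd (hbd a) hI
    have hc : ∀ ω : Ω, ∑ j ∈ insert a F, Y j ω = Y a ω + ∑ j ∈ F, Y j ω :=
      fun ω => Finset.sum_insert ha
    have hcard : ((insert a F).card : ℝ) = (F.card : ℝ) + 1 := by
      rw [Finset.card_insert_of_notMem ha]; push_cast; ring
    refine ⟨?_, ?_, ?_, ?_⟩
    · simp_rw [hc]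
      rw [E1, h1 a, IH1]; norm_num
    · simp_rw [hc]
      rw [E2, h1 a, IH1, IH2, h2 a, hcard]; ring
    · simp_rw [hc]
      rw [E3, h1 a, IH1, IH2, IH3, h2 a, h3 a]; ring
    · simp_rw [hc]
      rw [E4, h1 a, IH1, IH2, IH3, IH4, h2 a, h3 a, h4 a, hcard]; ring

set_option maxHeartbeats 1000000 in
lemma prob_core {s : ℕ} (hs : 1 ≤ s)
    (Y : Fin s → Ω → ℝ) (hmeas : ∀ j, Measurable (Y j))
    (hval : ∀ j ω, Y j ω = -1 ∨ Y j ω = 0 ∨ Y j ω = 1)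
    (hind : iIndepFun Y μ)
    (h1 : ∀ j, ∫ ω, Y j ω ∂μ = 0) (h2 : ∀ j, ∫ ω, (Y j ω)^2 ∂μ = 1/4) :
    ENNReal.ofReal (1/112)
      ≤ μ {ω | Real.sqrt s / (8 * Real.sqrt 7) ≤ ∑ j, Y j ω} := by
  have hbd : ∀ j ω, |Y j ω| ≤ 1 := by
    intro j ω; rcases hval j ω with h | h | h <;> rw [h] <;> norm_num
  have h3 : ∀ j, ∫ ω, (Y j ω)^3 ∂μ = 0 := by
    intro j
    have e : (fun ω => (Y j ω)^3) = fun ω => Y j ω := by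
      funext ω; rcases hval j ω with h | h | h <;> rw [h] <;> norm_num
    rw [e]; exact h1 j
  have h4 : ∀ j, ∫ ω, (Y j ω)^4 ∂μ = 1/4 := by
    intro j
    have e : (fun ω => (Y j ω)^4) = fun ω => (Y j ω)^2 := by
      funext ω; rcases hval j ω with h | h | h <;> rw [h] <;> norm_num
    rw [e]; exact h2 j
  obtain ⟨m1, m2, m3, m4⟩ := sum_moments μ Y hmeas hbd hind h1 h2 h3 h4 Finset.univ
  set u : ℝ := Real.sqrt s with hu
  set r : ℝ := Real.sqrt 7 with hr
  set T : Ω → ℝ := fun ω => ∑ j, Y j ω with hTdef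
  have hcards : (((Finset.univ : Finset (Fin s))).card : ℝ) = (s:ℝ) := by
    rw [Finset.card_univ, Fintype.card_fin]
  have hspos : (0:ℝ) < s := by exact_mod_cast hs
  have hs1 : (1:ℝ) ≤ (s:ℝ) := by exact_mod_cast hs
  have hupos : 0 < u := Real.sqrt_pos.mpr hspos
  have hrpos : 0 < r := Real.sqrt_pos.mpr (by norm_num)
  have hu2 : u^2 = (s:ℝ) := Real.sq_sqrt hspos.le
  have hr2 : r^2 = 7 := Real.sq_sqrt (by norm_num)
  have hru : (0:ℝ) < r * u := mul_pos hrpos hupos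
  -- restate moments for T
  have m1' : ∫ ω, T ω ∂μ = 0 := m1
  have m2' : ∫ ω, (T ω)^2 ∂μ = u^2/4 := by rw [hu2]; rw [hcards] at m2; exact m2
  have m4' : ∫ ω, (T ω)^4 ∂μ ≤ 7/16 * u^4 := by
    rw [hcards] at m4
    have : ∫ ω, (T ω)^4 ∂μ = (s:ℝ)/4 + 3*(s:ℝ)*((s:ℝ)-1)/16 := m4
    rw [this]
    nlinarith [hu2, hs1]
  -- measurability and integrability
  have hTm : Measurable T := Finset.measurable_sum Finset.univ (fun j _ => hmeas j)
  have hTbd : ∀ ω, |T ω| ≤ (s:ℝ) := by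
    intro ω
    calc |T ω| ≤ ∑ j, |Y j ω| := Finset.abs_sum_le_sum_abs _ _
      _ ≤ ∑ _j : Fin s, (1:ℝ) := Finset.sum_le_sum (fun j _ => hbd j ω)
      _ = (s:ℝ) := by simp
  have intT : Integrable T μ := integrable_of_bound μ T hTm _ hTbd
  have intT2 : Integrable (fun ω => (T ω)^2) μ := by
    apply integrable_of_bound μ _ (hTm.pow_const 2) ((s:ℝ)^2)
    intro ω; rw [abs_pow]; exact pow_le_pow_left₀ (abs_nonneg _) (hTbd ω) 2
  have intT4 : Integrable (fun ω => (T ω)^4) μ := by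
    apply integrable_of_bound μ _ (hTm.pow_const 4) ((s:ℝ)^4)
    intro ω; rw [abs_pow]; exact pow_le_pow_left₀ (abs_nonneg _) (hTbd ω) 4
  have intAbsT : Integrable (fun ω => |T ω|) μ := intT.abs
  have intAbsT3 : Integrable (fun ω => |T ω|^3) μ := by
    apply integrable_of_bound μ _ (hTm.abs.pow_const 3) ((s:ℝ)^3)
    intro ω
    rw [abs_pow, abs_abs]
    exact pow_le_pow_left₀ (abs_nonneg _) (hTbd ω) 3
  -- third absolute moment bound (multiplied through by r*u)
  have habs3 : (r*u) * ∫ ω, |T ω|^3 ∂μ ≤ 7/8 * u^4 := by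
    have hpt : ∀ ω, (r*u) * |T ω|^3 ≤ (r^2*u^2/4) * (T ω)^2 + (T ω)^4 := by
      intro ω
      have habs2 : |T ω|^2 = (T ω)^2 := sq_abs _
      have habs4 : |T ω|^4 = (T ω)^4 := by
        rw [show (4:ℕ) = 2*2 from rfl, pow_mul, pow_mul, sq_abs]
      have hsc : r^2*u^2/4 * |T ω|^2 = r^2*u^2/4 * (T ω)^2 := by rw [sq_abs]
      nlinarith [sq_nonneg (|T ω| * (|T ω| - r*u/2)), habs4, hsc, abs_nonneg (T ω)]
    have step : ∫ ω, (r*u) * |T ω|^3 ∂μ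
        ≤ ∫ ω, ((r^2*u^2/4) * (T ω)^2 + (T ω)^4) ∂μ :=
      integral_mono (intAbsT3.const_mul (r*u))
        ((intT2.const_mul (r^2*u^2/4)).add intT4) hpt
    have e1 : ∫ ω, (r*u) * |T ω|^3 ∂μ = (r*u) * ∫ ω, |T ω|^3 ∂μ :=
      integral_const_mul _ _
    have e2 : ∫ ω, ((r^2*u^2/4) * (T ω)^2 + (T ω)^4) ∂μ
        = (r^2*u^2/4) * (∫ ω, (T ω)^2 ∂μ) + ∫ ω, (T ω)^4 ∂μ := by
      rw [integral_add (intT2.const_mul (r^2*u^2/4)) intT4, integral_const_mul]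
    rw [e1] at step
    rw [e2, m2'] at step
    have hscale : r^2*u^2/4*(u^2/4) = 7/16*u^4 := by linear_combination (u^4/16)*hr2
    linarith [step, m4', hscale]
  -- divided form of the third moment bound
  have habs3' : ∫ ω, |T ω|^3 ∂μ ≤ r*u^3/8 := by
    have e78 : r*u*(r*u^3/8) = 7*u^4/8 := by linear_combination (u^4/8)*hr2
    nlinarith [habs3, hru, e78]
  -- first absolute moment lower bound
  have habs1 : r*u/14 ≤ ∫ ω, |T ω| ∂μ := by
    have hpt : ∀ ω, (r*u) * (T ω)^2 ≤ (r^2*u^2/4) * |T ω| + |T ω|^3 := by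
      intro ω
      have habs2 : |T ω|^2 = (T ω)^2 := sq_abs _
      have hsq := mul_nonneg (abs_nonneg (T ω)) (sq_nonneg (|T ω| - r*u/2))
      have hsc : r*u*|T ω|^2 = r*u*(T ω)^2 := by rw [sq_abs]
      nlinarith [hsq, hsc]
    have step : ∫ ω, (r*u) * (T ω)^2 ∂μ
        ≤ ∫ ω, ((r^2*u^2/4) * |T ω| + |T ω|^3) ∂μ :=
      integral_mono (intT2.const_mul (r*u))
        ((intAbsT.const_mul (r^2*u^2/4)).add intAbsT3) hpt
    have e1 : ∫ ω, (r*u) * (T ω)^2 ∂μ = (r*u) * ∫ ω, (T ω)^2 ∂μ :=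
      integral_const_mul _ _
    have e2 : ∫ ω, ((r^2*u^2/4) * |T ω| + |T ω|^3) ∂μ
        = (r^2*u^2/4) * (∫ ω, |T ω| ∂μ) + ∫ ω, |T ω|^3 ∂μ := by
      rw [integral_add (intAbsT.const_mul (r^2*u^2/4)) intAbsT3, integral_const_mul]
    rw [e1, m2'] at step
    rw [e2, hr2] at step
    -- step : r*u*(u^2/4) ≤ 7*u^2/4 * E1 + E3,  E3 ≤ r*u^3/8
    have hstep2 : r*u^3/8 ≤ 7*u^2/4 * ∫ ω, |T ω| ∂μ := by
      nlinarith [step, habs3']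
    have hu2pos : (0:ℝ) < u^2 := by positivity
    nlinarith [hstep2, hu2pos]
  -- positive part
  have intTplus : Integrable (fun ω => max (T ω) 0) μ := by
    apply integrable_of_bound μ _ (hTm.max measurable_const) (s:ℝ)
    intro ω
    rcases le_total 0 (T ω) with h | h
    · rw [max_eq_left h, abs_of_nonneg h]
      have := hTbd ω; rw [abs_of_nonneg h] at this; exact this
    · rw [max_eq_right h]; simpa using hspos.le
  have ETplus : ∫ ω, max (T ω) 0 ∂μ = (∫ ω, |T ω| ∂μ)/2 := by
    have e : (fun ω => max (T ω) 0) = fun ω => (T ω + |T ω|)/2 := by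
      funext ω
      rcases le_total 0 (T ω) with h | h
      · rw [max_eq_left h, abs_of_nonneg h]; ring
      · rw [max_eq_right h, abs_of_nonpos h]; ring
    rw [e, integral_div, integral_add intT intAbsT, m1', zero_add]
  -- the event
  set B : ℝ := r*u/56 with hB
  have hBpos : 0 < B := by positivity
  set A : Set Ω := {ω | B ≤ T ω} with hA
  have hAmeas : MeasurableSet A := measurableSet_le measurable_const hTm
  have hP1 : ∫ ω, max (T ω) 0 ∂μ ≤ B + ∫ ω in A, T ω ∂μ := by
    have hpt : ∀ ω, max (T ω) 0 ≤ B + A.indicator T ω := by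
      intro ω
      by_cases hω : ω ∈ A
      · rw [Set.indicator_of_mem hω]
        have : B ≤ T ω := hω
        rcases le_total 0 (T ω) with h | h
        · rw [max_eq_left h]; linarith
        · rw [max_eq_right h]; linarith
      · rw [Set.indicator_of_notMem hω]
        have : ¬ (B ≤ T ω) := hω
        push_neg at this
        rcases le_total 0 (T ω) with h | h
        · rw [max_eq_left h]; linarith
        · rw [max_eq_right h]; linarith
    have intg : Integrable (fun ω => B + A.indicator T ω) μ :=
      (integrable_const B).add (intT.indicator hAmeas)
    have step : ∫ ω, max (T ω) 0 ∂μ ≤ ∫ ω, (B + A.indicator T ω) ∂μ :=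
      integral_mono intTplus intg hpt
    have eq1 : ∫ ω, (B + A.indicator T ω) ∂μ
        = (∫ _ω : Ω, B ∂μ) + ∫ ω, A.indicator T ω ∂μ :=
      integral_add (integrable_const B) (intT.indicator hAmeas)
    have eqc : ∫ _ω : Ω, B ∂μ = B := by simp
    have eqi : ∫ ω, A.indicator T ω ∂μ = ∫ ω in A, T ω ∂μ := integral_indicator hAmeas
    linarith [step, eq1, eqc, eqi]
  have hP2 : (4*(r*u)) * ∫ ω in A, T ω ∂μ
      ≤ u^2/4 + 28*u^2 * (μ A).toReal := by
    have hpt : ∀ ω ∈ A, (4*(r*u)) * T ω ≤ (T ω)^2 + 28*u^2 := by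
      intro ω _
      have e4r : 4*((r*u)*(r*u)) = 28*u^2 := by linear_combination 4*u^2*hr2
      nlinarith [sq_nonneg (T ω - 2*(r*u)), e4r]
    have step : ∫ ω in A, (4*(r*u)) * T ω ∂μ
        ≤ ∫ ω in A, ((T ω)^2 + 28*u^2) ∂μ :=
      setIntegral_mono_on (intT.integrableOn.const_mul _)
        (intT2.integrableOn.add (integrableOn_const (measure_ne_top μ A)))
        hAmeas hpt
    have e1 : ∫ ω in A, (4*(r*u)) * T ω ∂μ = (4*(r*u)) * ∫ ω in A, T ω ∂μ :=
      integral_const_mul _ _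
    have e2 : ∫ ω in A, ((T ω)^2 + 28*u^2) ∂μ
        = (∫ ω in A, (T ω)^2 ∂μ) + (μ A).toReal * (28*u^2) := by
      rw [integral_add intT2.integrableOn
        (integrableOn_const (measure_ne_top μ A)), setIntegral_const,
        smul_eq_mul, measureReal_def]
    have e3 : ∫ ω in A, (T ω)^2 ∂μ ≤ u^2/4 := by
      rw [← m2']
      exact setIntegral_le_integral intT2 (Filter.Eventually.of_forall (fun ω => by positivity))
    rw [e1] at step
    rw [e2] at step
    linarith
  -- combine everything
  have hTplus_ge : r*u/28 ≤ ∫ ω, max (T ω) 0 ∂μ := by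
    rw [ETplus]; linarith
  have hAT_ge : B ≤ ∫ ω in A, T ω ∂μ := by
    have : 2*B = r*u/28 := by rw [hB]; ring
    linarith
  have hP : (1:ℝ)/112 ≤ (μ A).toReal := by
    have hmulB := mul_le_mul_of_nonneg_left hAT_ge (by positivity : (0:ℝ) ≤ 4*(r*u))
    have e4B : 4*(r*u)*B = u^2/2 := by
      rw [hB]; linear_combination (u^2/14)*hr2
    have hu2pos : (0:ℝ) < u^2 := by positivity
    nlinarith [hP2, hmulB, e4B, hu2pos]
  -- conclude in ENNReal
  have hseteq : {ω | u / (8 * r) ≤ ∑ j, Y j ω} = A := by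
    have hbeq : u / (8 * r) = B := by
      rw [hB, div_eq_iff (show (8:ℝ)*r ≠ 0 by positivity)]
      linear_combination (-u/7)*hr2
    rw [hbeq, hA]
  rw [hseteq]
  calc ENNReal.ofReal (1/112) ≤ ENNReal.ofReal ((μ A).toReal) :=
        ENNReal.ofReal_le_ofReal hP
    _ = μ A := ENNReal.ofReal_toReal (measure_ne_top μ A)

end Prob2
end L2Aux

open L2Aux in
set_option maxHeartbeats 1000000 in
/-- There is a constant `c > 0` such that for all sufficiently large `n` there are
distributions `p n, q n` on `[n]` with `‖p n - q n‖₁ = 1` such that for every sample-size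
function `s` with `s n / n → 0`, for all sufficiently large `n`: if `p̂` is the empirical
distribution of `s n` i.i.d. samples from `p n`, then `P(‖p n - p̂‖₂ > ‖q n - p̂‖₂) ≥ c`. -/
theorem l2_nns_on_empirical_fails :
    ∃ c : ℝ, 0 < c ∧
      ∃ (N : ℕ) (p q : (n : ℕ) → Fin n → ℝ),
        (∀ n, N ≤ n → IsDist (p n) ∧ IsDist (q n) ∧ (∑ j, |p n j - q n j| = 1)) ∧
        ∀ s : ℕ → ℕ, Filter.Tendsto (fun n => (s n : ℝ) / n) Filter.atTop (nhds 0) →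
          ∃ n₀ : ℕ, ∀ n, n₀ ≤ n →
            ∀ (Ω : Type) (_ : MeasurableSpace Ω) (μ : Measure Ω), IsProbabilityMeasure μ →
              ∀ X : Fin (s n) → Ω → Fin n, IIDSamples μ (p n) X →
                ENNReal.ofReal c ≤
                  μ {ω | Real.sqrt (∑ j, (q n j - empirical X ω j) ^ 2) <
                          Real.sqrt (∑ j, (p n j - empirical X ω j) ^ 2)} := by
  refine ⟨1/112, by norm_num, 100, (fun n => pp n), (fun n => qq n), ?_, ?_⟩
  · intro n hn
    exact ⟨⟨pp_nonneg n hn, sum_pp n hn⟩, ⟨qq_nonneg n hn, sum_qq n hn⟩, sum_l1 n hn⟩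
  · intro s hs
    have hev : ∀ᶠ n in Filter.atTop, (s n : ℝ)/n < 1/2000000 :=
      hs.eventually_lt_const (by norm_num)
    obtain ⟨n₁, hn₁⟩ := Filter.eventually_atTop.mp hev
    refine ⟨max n₁ 100, ?_⟩
    intro n hn Ω mΩ μ hμ X hX
    obtain ⟨hXm, hXind, hXmarg⟩ := hX
    have hn100 : 100 ≤ n := le_trans (le_max_right _ _) hn
    have hnpos : (0:ℝ) < n := by
      have : (100:ℝ) ≤ n := by exact_mod_cast hn100
      linarith
    have hsn : (s n : ℝ) * 2000000 ≤ (n:ℝ) := by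
      have h := hn₁ n (le_trans (le_max_left _ _) hn)
      rw [div_lt_iff₀ hnpos] at h
      nlinarith
    have h0n : 0 < n := by omega
    have h1n : 1 < n := by omega
    set i0 : Fin n := ⟨0, h0n⟩ with hi0
    set i1 : Fin n := ⟨1, h1n⟩ with hi1
    have hi01 : i0 ≠ i1 := by
      intro h
      have := Fin.val_eq_of_eq h
      simp [hi0, hi1] at this
    by_cases hs0 : s n = 0
    · -- no samples: the empirical distribution is zero
      have hemp : ∀ (ω : Ω) (i : Fin n), empirical X ω i = 0 := by
        intro ω i; simp [empirical, hs0]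
      have hset : {ω : Ω | Real.sqrt (∑ j, (qq n j - empirical X ω j) ^ 2) <
            Real.sqrt (∑ j, (pp n j - empirical X ω j) ^ 2)} = Set.univ := by
        ext ω
        simp only [Set.mem_setOf_eq, Set.mem_univ, iff_true]
        have h := event_zero n hn100
        apply Real.sqrt_lt_sqrt (by positivity)
        simp only [hemp ω]
        exact h
      rw [hset, measure_univ]
      exact ENNReal.ofReal_le_one.mpr (by norm_num)
    · have hs1 : 1 ≤ s n := Nat.one_le_iff_ne_zero.mpr hs0
      have hspos : (0:ℝ) < s n := by exact_mod_cast hs1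
      set g : Fin n → ℝ := fun i => if i = i0 then 1 else if i = i1 then -1 else 0 with hg
      have hgm : Measurable g := Measurable.of_discrete
      set Y : Fin (s n) → Ω → ℝ := fun j ω => g (X j ω) with hY
      have hYm : ∀ j, Measurable (Y j) := fun j => hgm.comp (hXm j)
      have hYval : ∀ j ω, Y j ω = -1 ∨ Y j ω = 0 ∨ Y j ω = 1 := by
        intro j ω
        simp only [hY, hg]
        split_ifs <;> simp
      have hYind : iIndepFun Y μ :=
        hXind.comp (fun _ => g) (fun _ => hgm)
      -- integral of indicator-type functions
      have intIte : ∀ (j : Fin (s n)) (i : Fin n),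
          Integrable (fun ω => if X j ω = i then (1:ℝ) else 0) μ := by
        intro j i
        apply integrable_of_bound μ _
          ((Measurable.of_discrete (f := fun v : Fin n => if v = i then (1:ℝ) else 0)).comp
            (hXm j)) 1
        intro ω
        simp only [Function.comp]
        split_ifs <;> norm_num
      have hIi : ∀ (j : Fin (s n)) (i : Fin n),
          ∫ ω, (if X j ω = i then (1:ℝ) else 0) ∂μ = pp n i := by
        intro j i
        have hset : MeasurableSet {ω : Ω | X j ω = i} :=
          (hXm j) (measurableSet_singleton i)
        have e : (fun ω => if X j ω = i then (1:ℝ) else 0)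
            = Set.indicator {ω : Ω | X j ω = i} (fun _ => 1) := by
          funext ω
          by_cases h : X j ω = i
          · rw [if_pos h, Set.indicator_of_mem (by exact h)]
          · rw [if_neg h, Set.indicator_of_notMem (by exact h)]
        rw [e, integral_indicator_const (1:ℝ) hset, measureReal_def, hXmarg j i, smul_eq_mul, mul_one,
          ENNReal.toReal_ofReal (pp_nonneg n hn100 i)]
      have pv0 : pp n i0 = 1/8 := by simp [pp, FP, hi0]
      have pv1 : pp n i1 = 1/8 := by simp [pp, FP, hi1]
      have hYrep : ∀ (j : Fin (s n)) (ω : Ω), Y j ω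
          = (if X j ω = i0 then (1:ℝ) else 0) - (if X j ω = i1 then (1:ℝ) else 0) := by
        intro j ω
        simp only [hY, hg]
        by_cases h0 : X j ω = i0
        · rw [if_pos h0, if_pos h0, if_neg (h0 ▸ hi01 : ¬ X j ω = i1)]
          norm_num
        · rw [if_neg h0, if_neg h0]
          by_cases h1 : X j ω = i1
          · rw [if_pos h1, if_pos h1]; norm_num
          · rw [if_neg h1, if_neg h1]; norm_num
      have hY1 : ∀ j, ∫ ω, Y j ω ∂μ = 0 := by
        intro j
        have e : (fun ω => Y j ω) = fun ω =>
            (if X j ω = i0 then (1:ℝ) else 0) - (if X j ω = i1 then (1:ℝ) else 0) := by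
          funext ω; exact hYrep j ω
        rw [e, integral_sub (intIte j i0) (intIte j i1), hIi j i0, hIi j i1, pv0, pv1]
        norm_num
      have hY2 : ∀ j, ∫ ω, (Y j ω)^2 ∂μ = 1/4 := by
        intro j
        have e : (fun ω => (Y j ω)^2) = fun ω =>
            (if X j ω = i0 then (1:ℝ) else 0) + (if X j ω = i1 then (1:ℝ) else 0) := by
          funext ω
          rw [hYrep j ω]
          by_cases h0 : X j ω = i0
          · rw [if_pos h0, if_neg (h0 ▸ hi01 : ¬ X j ω = i1)]; norm_num
          · rw [if_neg h0]
            by_cases h1 : X j ω = i1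
            · rw [if_pos h1]; norm_num
            · rw [if_neg h1]; norm_num
        rw [e, integral_add (intIte j i0) (intIte j i1), hIi j i0, hIi j i1, pv0, pv1]
        norm_num
      have hcore := prob_core μ hs1 Y hYm hYval hYind hY1 hY2
      refine le_trans hcore (measure_mono ?_)
      intro ω hω
      simp only [Set.mem_setOf_eq] at hω ⊢
      -- facts about the empirical distribution
      have hph0 : ∀ i, 0 ≤ empirical X ω i := by
        intro i; unfold empirical; positivity
      have hphsum : ∑ i, empirical X ω i ≤ 1 := by
        unfold empirical
        rw [← Finset.sum_div]
        have hcnt : ∑ i : Fin n, (((Finset.univ.filter fun j => X j ω = i)).card : ℝ)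
            = (s n : ℝ) := by
          rw [← Nat.cast_sum]
          congr 1
          have h := Finset.card_eq_sum_card_fiberwise
            (f := fun j : Fin (s n) => X j ω) (s := Finset.univ) (t := Finset.univ)
            (fun j _ => Finset.mem_univ _)
          rw [← h, Finset.card_univ, Fintype.card_fin]
        rw [hcnt, div_self hspos.ne']
      -- the statistic
      have hT : ∑ j, Y j ω = (s n : ℝ) * (empirical X ω i0 - empirical X ω i1) := by
        have e : ∀ j : Fin (s n), Y j ω
            = (if X j ω = i0 then (1:ℝ) else 0) - (if X j ω = i1 then (1:ℝ) else 0) :=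
          fun j => hYrep j ω
        rw [Finset.sum_congr rfl (fun j _ => e j), Finset.sum_sub_distrib,
          Finset.sum_boole, Finset.sum_boole]
        unfold empirical
        field_simp
      have hD : 25 / Real.sqrt n ≤ empirical X ω i0 - empirical X ω i1 := by
        set D := empirical X ω i0 - empirical X ω i1 with hDdef
        set sr := Real.sqrt (s n) with hsr
        set r7 := Real.sqrt 7 with hr7
        have hsrpos : 0 < sr := Real.sqrt_pos.mpr hspos
        have hr7pos : 0 < r7 := Real.sqrt_pos.mpr (by norm_num)
        have hsr2 : sr^2 = (s n : ℝ) := Real.sq_sqrt hspos.le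
        have hr72 : r7^2 = 7 := Real.sq_sqrt (by norm_num)
        have hω' : sr/(8*r7) ≤ (s n : ℝ) * D := by rw [← hT]; exact hω
        have key : sr ≤ 8*r7*((s n : ℝ)*D) := by
          have hid : 8*r7*(sr/(8*r7)) = sr := by field_simp
          calc sr = 8*r7*(sr/(8*r7)) := hid.symm
            _ ≤ 8*r7*((s n : ℝ)*D) :=
              mul_le_mul_of_nonneg_left hω' (by positivity)
        rw [← hsr2] at key
        -- √n ≥ 200 √7 sr
        have hnsr : 200*r7*sr ≤ Real.sqrt n := by
          have h1 : Real.sqrt (280000 * (s n : ℝ)) ≤ Real.sqrt n := by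
            apply Real.sqrt_le_sqrt
            nlinarith
          have h2 : Real.sqrt (280000 * (s n : ℝ)) = 200*r7*sr := by
            rw [show (280000:ℝ) * (s n : ℝ) = (200*r7*sr)^2 by
              nlinarith [hr72, hsr2], Real.sqrt_sq (by positivity)]
          linarith [h2 ▸ h1]
        have hD0 : 0 ≤ D := by
          have hpos : (0:ℝ) < 8*r7*sr^2 := by positivity
          nlinarith [key, hsrpos, hpos]
        rw [div_le_iff₀ (by positivity : (0:ℝ) < Real.sqrt n)]
        have h3 : 200*r7*sr*D ≤ Real.sqrt n * D := by
          apply mul_le_mul_of_nonneg_right hnsr hD0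
        have h4 : 25 ≤ 200*r7*sr*D := by nlinarith [key, hsrpos]
        nlinarith [h3, h4]
      apply Real.sqrt_lt_sqrt (by positivity)
      exact event_pos n hn100 (fun i => empirical X ω i) hph0 hphsum i0 i1 rfl rfl hD
end

section
/- Let p and v be probability distributions on [n], let L ⊆ [n], let T = Σ_{i∈L} p(i), let s > 0, and let X(1), ..., X(n) be independent random variables with X(i) ~ Poisson(s·p(i)). Then Var[ Σ_{i∈L} (X(i) - s·v(i))² ] ≤ 4s³·||p_L||_2·||p_L - v_L||_2² + 6s²·||p_L||_2² + s·T. -/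
open MeasureTheory ProbabilityTheory Finset

open scoped NNReal ENNReal

namespace LightAux

lemma desc_cast : ∀ (k n : ℕ), (n.descFactorial k : ℝ) = ∏ i ∈ Finset.range k, ((n : ℝ) - i)
  | 0, n => by simp
  | (k+1), n => by
    rw [Nat.descFactorial_succ, Finset.prod_range_succ, ← desc_cast k n]
    rcases le_or_gt k n with h | h
    · push_cast [h]
      ring
    · have h0 : n.descFactorial k = 0 := Nat.descFactorial_eq_zero_iff_lt.mpr h
      simp [Nat.sub_eq_zero_of_le h.le, h0]

lemma hasSum_desc (r : ℝ≥0) (k : ℕ) :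
    HasSum (fun n => poissonPMFReal r n * (n.descFactorial k : ℝ)) ((r : ℝ) ^ k) := by
  set f : ℕ → ℝ := fun n => poissonPMFReal r n * (n.descFactorial k : ℝ) with hf
  have h0 : ∑ i ∈ Finset.range k, f i = 0 := by
    apply Finset.sum_eq_zero
    intro i hi
    have : i.descFactorial k = 0 :=
      Nat.descFactorial_eq_zero_iff_lt.mpr (Finset.mem_range.mp hi)
    simp [hf, this]
  have key : ∀ m : ℕ, f (m + k) = (r : ℝ) ^ k * poissonPMFReal r m := by
    intro m
    have hfac : (m.factorial : ℝ) * ((m + k).descFactorial k : ℝ) = ((m + k).factorial : ℝ) := by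
      have := Nat.factorial_mul_descFactorial (Nat.le_add_left k m)
      rw [Nat.add_sub_cancel] at this
      exact_mod_cast congrArg Nat.cast this
    have h1 : ((m + k).factorial : ℝ) ≠ 0 := Nat.cast_ne_zero.mpr (Nat.factorial_ne_zero _)
    have h2 : (m.factorial : ℝ) ≠ 0 := Nat.cast_ne_zero.mpr (Nat.factorial_ne_zero _)
    simp only [hf, poissonPMFReal]
    field_simp
    linear_combination ((r:ℝ)^m * (r:ℝ)^k) * hfac
  have H : HasSum (fun m => f (m + k)) ((r : ℝ) ^ k) := by
    have := (poissonPMFRealSum r).mul_left ((r : ℝ) ^ k)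
    simpa [key, poissonPMFReal] using this
  have := (hasSum_nat_add_iff (f := f) k).mp H
  simpa [h0] using this

variable {r : ℝ≥0} {f : ℕ → ℝ} {S : ℝ}

lemma integrable_of_hasSum (hf : ∀ n, 0 ≤ f n)
    (h : HasSum (fun n => poissonPMFReal r n * f n) S) :
    Integrable f (poissonMeasure r) := by
  refine ⟨measurable_from_nat.aestronglyMeasurable, ?_⟩
  rw [hasFiniteIntegral_iff_norm]
  have hsingle : ∀ a : ℕ, poissonMeasure r {a} = ENNReal.ofReal (poissonPMFReal r a) := by
    intro a
    rw [poissonMeasure_singleton]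
    rfl
  calc ∫⁻ a, ENNReal.ofReal ‖f a‖ ∂(poissonMeasure r)
      = ∑' a, ENNReal.ofReal ‖f a‖ * poissonMeasure r {a} := lintegral_countable' _
    _ = ∑' a, ENNReal.ofReal (poissonPMFReal r a * f a) := by
        refine tsum_congr fun a => ?_
        rw [hsingle a, ← ENNReal.ofReal_mul (norm_nonneg _), Real.norm_eq_abs,
          abs_of_nonneg (hf a), mul_comm]
    _ = ENNReal.ofReal S := by
        rw [← ENNReal.ofReal_tsum_of_nonneg (fun a => mul_nonneg poissonPMFReal_nonneg (hf a))
          h.summable, h.tsum_eq]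
    _ < ∞ := ENNReal.ofReal_lt_top

lemma integral_eq_of_hasSum (hf : ∀ n, 0 ≤ f n)
    (h : HasSum (fun n => poissonPMFReal r n * f n) S) :
    ∫ a, f a ∂(poissonMeasure r) = S := by
  rw [integral_poissonMeasure' (integrable_of_hasSum hf h)]
  have : ∀ a : ℕ, (Real.exp (-(r:ℝ)) * (r:ℝ) ^ a / (a.factorial : ℝ)) • f a = poissonPMFReal r a * f a := by
    intro a
    rfl
  rw [tsum_congr this, h.tsum_eq]

lemma hasSum_poly (r : ℝ≥0) (a0 a1 a2 a3 a4 : ℝ) :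
    HasSum (fun n => poissonPMFReal r n *
        (a0 + a1 * n + a2 * (n : ℝ) ^ 2 + a3 * (n : ℝ) ^ 3 + a4 * (n : ℝ) ^ 4))
      (a0 + a1 * r + a2 * ((r : ℝ) ^ 2 + r) + a3 * ((r : ℝ) ^ 3 + 3 * (r : ℝ) ^ 2 + r)
        + a4 * ((r : ℝ) ^ 4 + 6 * (r : ℝ) ^ 3 + 7 * (r : ℝ) ^ 2 + r)) := by
  have h0 := (poissonPMFRealSum r).mul_left a0
  have h1 := (hasSum_desc r 1).mul_left (a1 + a2 + a3 + a4)
  have h2 := (hasSum_desc r 2).mul_left (a2 + 3 * a3 + 7 * a4)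
  have h3 := (hasSum_desc r 3).mul_left (a3 + 6 * a4)
  have h4 := (hasSum_desc r 4).mul_left a4
  have H := (((h0.add h1).add h2).add h3).add h4
  convert H using 1
  · rfl
  · funext n
    rw [desc_cast 1 n, desc_cast 2 n, desc_cast 3 n, desc_cast 4 n]
    simp only [Finset.prod_range_succ, Finset.prod_range_zero]
    push_cast
    simp only [poissonPMFReal]
    ring
  · ring

lemma poisson_memℒp (r : ℝ≥0) (c : ℝ) :
    MemLp (fun n : ℕ => ((n : ℝ) - c) ^ 2) 2 (poissonMeasure r) := by
  have h2 := hasSum_poly r (c ^ 4) (-4 * c ^ 3) (6 * c ^ 2) (-4 * c) 1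
  have h2' : HasSum (fun n => poissonPMFReal r n * (((n : ℝ) - c) ^ 2) ^ 2)
      ((c:ℝ) ^ 4 + (-4 * c ^ 3) * r + (6 * c ^ 2) * ((r : ℝ) ^ 2 + r)
        + (-4 * c) * ((r : ℝ) ^ 3 + 3 * (r : ℝ) ^ 2 + r)
        + 1 * ((r : ℝ) ^ 4 + 6 * (r : ℝ) ^ 3 + 7 * (r : ℝ) ^ 2 + r)) := by
    convert h2 using 1
    funext n; ring
  refine (memLp_two_iff_integrable_sq measurable_from_nat.aestronglyMeasurable).mpr ?_
  exact integrable_of_hasSum (fun n => sq_nonneg _) h2'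

lemma poisson_variance (r : ℝ≥0) (c : ℝ) :
    variance (fun n : ℕ => ((n : ℝ) - c) ^ 2) (poissonMeasure r) =
      (r : ℝ) + 2 * (r : ℝ) ^ 2 + 4 * ((r : ℝ) - c) * r + 4 * ((r : ℝ) - c) ^ 2 * r := by
  have h1 := hasSum_poly r (c ^ 2) (-2 * c) 1 0 0
  have h1' : HasSum (fun n => poissonPMFReal r n * ((n : ℝ) - c) ^ 2)
      ((c:ℝ) ^ 2 + (-2 * c) * r + 1 * ((r : ℝ) ^ 2 + r) + 0 + 0) := by
    convert h1 using 1
    · funext n; ring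
    · ring
  have h2 := hasSum_poly r (c ^ 4) (-4 * c ^ 3) (6 * c ^ 2) (-4 * c) 1
  have h2' : HasSum (fun n => poissonPMFReal r n * (((n : ℝ) - c) ^ 2) ^ 2)
      ((c:ℝ) ^ 4 + (-4 * c ^ 3) * r + (6 * c ^ 2) * ((r : ℝ) ^ 2 + r)
        + (-4 * c) * ((r : ℝ) ^ 3 + 3 * (r : ℝ) ^ 2 + r)
        + 1 * ((r : ℝ) ^ 4 + 6 * (r : ℝ) ^ 3 + 7 * (r : ℝ) ^ 2 + r)) := by
    convert h2 using 1
    funext n; ring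
  rw [variance_eq_sub (poisson_memℒp r c)]
  have e2 : ∫ a, ((fun n : ℕ => ((n : ℝ) - c) ^ 2) ^ 2) a ∂(poissonMeasure r)
      = ((c:ℝ) ^ 4 + (-4 * c ^ 3) * r + (6 * c ^ 2) * ((r : ℝ) ^ 2 + r)
        + (-4 * c) * ((r : ℝ) ^ 3 + 3 * (r : ℝ) ^ 2 + r)
        + 1 * ((r : ℝ) ^ 4 + 6 * (r : ℝ) ^ 3 + 7 * (r : ℝ) ^ 2 + r)) := by
    rw [show ((fun n : ℕ => ((n : ℝ) - c) ^ 2) ^ 2) = fun n : ℕ => (((n : ℝ) - c) ^ 2) ^ 2 from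
      rfl]
    exact integral_eq_of_hasSum (fun n => sq_nonneg _) h2'
  have e1 : ∫ a, ((a : ℝ) - c) ^ 2 ∂(poissonMeasure r)
      = ((c:ℝ) ^ 2 + (-2 * c) * r + 1 * ((r : ℝ) ^ 2 + r) + 0 + 0) :=
    integral_eq_of_hasSum (fun n => sq_nonneg _) h1'
  rw [e2, e1]
  ring

lemma variance_comp {Ω : Type} [MeasurableSpace Ω] (μ : Measure Ω) [IsProbabilityMeasure μ]
    (T : Ω → ℕ) (hT : Measurable T) (g : ℕ → ℝ) (hg : MemLp g 2 (Measure.map T μ)) :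
    variance (fun ω => g (T ω)) μ = variance g (Measure.map T μ) := by
  have hmap : IsProbabilityMeasure (Measure.map T μ) := Measure.isProbabilityMeasure_map hT.aemeasurable
  have hcomp : MemLp (fun ω => g (T ω)) 2 μ :=
    (memLp_map_measure_iff measurable_from_nat.aestronglyMeasurable hT.aemeasurable).mp hg
  rw [variance_eq_sub hcomp, variance_eq_sub hg]
  have e1 : ∫ a, g a ∂(Measure.map T μ) = ∫ ω, g (T ω) ∂μ :=
    integral_map hT.aemeasurable measurable_from_nat.aestronglyMeasurable
  have e2 : ∫ a, (g ^ 2) a ∂(Measure.map T μ) = ∫ ω, (g ^ 2) (T ω) ∂μ :=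
    integral_map hT.aemeasurable measurable_from_nat.aestronglyMeasurable
  rw [e1] at *
  congr 1
  rw [e2]
  rfl

end LightAux

open LightAux in
/-- If `X i ~ Poisson(s p i)` are independent and `T = ∑_{i ∈ L} p i`, then
`Var[∑_{i ∈ L} (X i - s v i)²] ≤ 4 s³ ‖p_L‖₂ ‖p_L - v_L‖₂² + 6 s² ‖p_L‖₂² + s T`. -/
theorem light_estimator_variance {n : ℕ} (p v : Fin n → ℝ)
    (hp : IsDist p) (hv : IsDist v) (L : Finset (Fin n)) (s : ℝ) (hs : 0 < s)
    (Ω : Type) [MeasurableSpace Ω] (μ : Measure Ω) [IsProbabilityMeasure μ]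
    (X : Fin n → Ω → ℕ) (hmeas : ∀ i, Measurable (X i))
    (hindep : iIndepFun X μ)
    (hlaw : ∀ i, Measure.map (X i) μ = poissonMeasure (Real.toNNReal (s * p i))) :
    variance (fun ω => ∑ i ∈ L, ((X i ω : ℝ) - s * v i) ^ 2) μ ≤
      4 * s ^ 3 * Real.sqrt (∑ i ∈ L, (p i) ^ 2) * (∑ i ∈ L, (p i - v i) ^ 2)
        + 6 * s ^ 2 * (∑ i ∈ L, (p i) ^ 2) + s * ∑ i ∈ L, p i := by
  set Y : Fin n → Ω → ℝ := fun i ω => ((X i ω : ℝ) - s * v i) ^ 2 with hY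
  have hr : ∀ i, ((Real.toNNReal (s * p i) : ℝ≥0) : ℝ) = s * p i := fun i =>
    Real.coe_toNNReal _ (mul_nonneg hs.le (hp.1 i))
  have hmem : ∀ i, MemLp (Y i) 2 μ := by
    intro i
    have h := poisson_memℒp (Real.toNNReal (s * p i)) (s * v i)
    rw [← hlaw i] at h
    exact (memLp_map_measure_iff measurable_from_nat.aestronglyMeasurable
      (hmeas i).aemeasurable).mp h
  have hvar : ∀ i, variance (Y i) μ =
      s * p i + 2 * (s * p i) ^ 2 + 4 * (s * (p i - v i)) * (s * p i)
        + 4 * (s * (p i - v i)) ^ 2 * (s * p i) := by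
    intro i
    have h := poisson_memℒp (Real.toNNReal (s * p i)) (s * v i)
    rw [← hlaw i] at h
    have := variance_comp μ (X i) (hmeas i) (fun m : ℕ => ((m : ℝ) - s * v i) ^ 2) h
    rw [hY]
    rw [this, hlaw i, poisson_variance, hr i]
    ring
  have hpair : Set.Pairwise ↑L fun i j => IndepFun (Y i) (Y j) μ := by
    intro i _ j _ hij
    have : IndepFun (Y i) (Y j) μ := (hindep.indepFun hij).comp
      (measurable_from_nat (f := fun m : ℕ => ((m : ℝ) - s * v i) ^ 2))
      (measurable_from_nat (f := fun m : ℕ => ((m : ℝ) - s * v j) ^ 2))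
    exact this
  have hsum : variance (fun ω => ∑ i ∈ L, Y i ω) μ = ∑ i ∈ L, variance (Y i) μ := by
    rw [show (fun ω => ∑ i ∈ L, Y i ω) = ∑ i ∈ L, Y i from by funext ω; simp]
    exact IndepFun.variance_sum (fun i _ => hmem i) hpair
  rw [show (fun ω => ∑ i ∈ L, ((X i ω : ℝ) - s * v i) ^ 2) = fun ω => ∑ i ∈ L, Y i ω from rfl,
    hsum]
  have hQ : ∀ i ∈ L, p i ≤ Real.sqrt (∑ j ∈ L, (p j) ^ 2) := by
    intro i hi
    have h1 : p i ^ 2 ≤ ∑ j ∈ L, (p j) ^ 2 :=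
      Finset.single_le_sum (fun j _ => sq_nonneg (p j)) hi
    calc p i = Real.sqrt (p i ^ 2) := (Real.sqrt_sq (hp.1 i)).symm
      _ ≤ _ := Real.sqrt_le_sqrt h1
  calc ∑ i ∈ L, variance (Y i) μ
      ≤ ∑ i ∈ L, (4 * s ^ 3 * Real.sqrt (∑ j ∈ L, (p j) ^ 2) * (p i - v i) ^ 2
          + 6 * s ^ 2 * (p i) ^ 2 + s * p i) := by
        refine Finset.sum_le_sum fun i hi => ?_
        rw [hvar i]
        have h1 : p i * (p i - v i) ^ 2 ≤ Real.sqrt (∑ j ∈ L, (p j) ^ 2) * (p i - v i) ^ 2 :=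
          mul_le_mul_of_nonneg_right (hQ i hi) (sq_nonneg _)
        have h2 : s ^ 3 * (p i * (p i - v i) ^ 2)
            ≤ s ^ 3 * (Real.sqrt (∑ j ∈ L, (p j) ^ 2) * (p i - v i) ^ 2) :=
          mul_le_mul_of_nonneg_left h1 (pow_pos hs 3).le
        have h3 : 0 ≤ s ^ 2 * (p i * v i) :=
          mul_nonneg (sq_nonneg s) (mul_nonneg (hp.1 i) (hv.1 i))
        nlinarith [h2, h3]
    _ = 4 * s ^ 3 * Real.sqrt (∑ i ∈ L, (p i) ^ 2) * (∑ i ∈ L, (p i - v i) ^ 2)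
        + 6 * s ^ 2 * (∑ i ∈ L, (p i) ^ 2) + s * ∑ i ∈ L, p i := by
      rw [Finset.sum_add_distrib, Finset.sum_add_distrib, ← Finset.mul_sum, ← Finset.mul_sum,
        ← Finset.mul_sum]
end

section
/- There is an absolute constant C such that the following holds. Let p and v be probability distributions on [n], let L ⊆ [n], let 0 < ε ≤ 1, and suppose ||p_L - v_L||_2 ≤ ε/(2√n). Let X(1), ..., X(n) be independent with X(i) ~ Poisson(s·p(i)), set Z_1 = Σ_{i∈L} (X(i) - s·v(i))² and t = s²·||p_L - v_L||_2²/4 + s²·ε²/(4n). If s ≥ C · max( n·||p_L||_2 / ε², n^{2/3} / ε^{4/3} ), then P[ |Z_1 - E[Z_1]| ≥ t ] ≤ 0.01. -/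
open MeasureTheory ProbabilityTheory Finset
open scoped NNReal ENNReal

lemma poisson_meas_singleton (r : ℝ≥0) (k : ℕ) :
    poissonMeasure r {k} = ENNReal.ofReal (poissonPMFReal r k) := by
  rw [poissonMeasure_singleton]
  rfl

lemma integrable_poisson_of_hasSum {r : ℝ≥0} {f : ℕ → ℝ} (hf : ∀ k, 0 ≤ f k) {S : ℝ}
    (h : HasSum (fun k => f k * poissonPMFReal r k) S) :
    Integrable f (poissonMeasure r) := by
  refine ⟨(measurable_from_top).aestronglyMeasurable, ?_⟩
  rw [HasFiniteIntegral, MeasureTheory.lintegral_countable']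
  have e : ∀ k : ℕ, ‖f k‖ₑ * poissonMeasure r {k}
      = ENNReal.ofReal (f k * poissonPMFReal r k) := by
    intro k
    rw [poisson_meas_singleton, ENNReal.ofReal_mul (hf k)]
    congr 1
    rw [← ofReal_norm_eq_enorm, Real.norm_of_nonneg (hf k)]
  rw [tsum_congr e, ← ENNReal.ofReal_tsum_of_nonneg
    (fun k => mul_nonneg (hf k) poissonPMFReal_nonneg) h.summable]
  exact ENNReal.ofReal_lt_top

lemma integral_poisson_of_hasSum {r : ℝ≥0} {f : ℕ → ℝ} (hf : ∀ k, 0 ≤ f k) {S : ℝ}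
    (h : HasSum (fun k => f k * poissonPMFReal r k) S) :
    ∫ k, f k ∂(poissonMeasure r) = S := by
  rw [integral_poissonMeasure' (integrable_poisson_of_hasSum hf h)]
  rw [← h.tsum_eq]
  congr 1
  ext k
  rw [smul_eq_mul, mul_comm]
  rfl

lemma hasSum_poisson_desc (r : ℝ≥0) (m : ℕ) :
    HasSum (fun k : ℕ => (k.descFactorial m : ℝ) * poissonPMFReal r k) ((r : ℝ) ^ m) := by
  set f : ℕ → ℝ := fun k => (k.descFactorial m : ℝ) * poissonPMFReal r k with hfdef
  have hzero : ∀ i ∈ Finset.range m, f i = 0 := by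
    intro i hi
    simp only [hfdef]
    rw [Nat.descFactorial_eq_zero_iff_lt.mpr (Finset.mem_range.mp hi)]
    simp
  have hshift : ∀ j : ℕ, f (j + m) = (r : ℝ) ^ m * poissonPMFReal r j := by
    intro j
    have hfac : (Nat.factorial j) * (j + m).descFactorial m = Nat.factorial (j+m) := by
      have := Nat.factorial_mul_descFactorial (Nat.le_add_left m j)
      simpa [Nat.add_sub_cancel] using this
    simp only [hfdef, poissonPMFReal]
    have hj : ((Nat.factorial j) : ℝ) ≠ 0 := by positivity
    have hjm : ((Nat.factorial (j+m)) : ℝ) ≠ 0 := by positivity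
    have hfacR : ((Nat.factorial j) : ℝ) * ((j + m).descFactorial m : ℝ) = (Nat.factorial (j+m) : ℝ) := by
      exact_mod_cast congrArg (fun x : ℕ => (x : ℝ)) hfac
    field_simp
    rw [pow_add]
    linear_combination ((r:ℝ)^j * (r:ℝ)^m) * hfacR
  have h1 : HasSum (fun j => f (j + m)) ((r : ℝ) ^ m) := by
    have := (poissonPMFRealSum r).mul_left ((r : ℝ) ^ m)
    simpa [hshift, mul_one, poissonPMFReal] using this
  have h2 : HasSum (fun j => f (j + m)) ((r : ℝ) ^ m - ∑ i ∈ Finset.range m, f i) := by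
    rw [Finset.sum_eq_zero hzero, sub_zero]; exact h1
  exact (hasSum_nat_add_iff' (f := f) m).mp h2

lemma castD1 (k : ℕ) : (k.descFactorial 1 : ℝ) = k := by simp
lemma castD2 (k : ℕ) : (k.descFactorial 2 : ℝ) = k * (k - 1) := by
  match k with
  | 0 => simp [Nat.descFactorial]
  | 1 => simp [Nat.descFactorial]
  | (n+2) => simp [Nat.descFactorial]; push_cast; ring
lemma castD3 (k : ℕ) : (k.descFactorial 3 : ℝ) = k * (k - 1) * (k - 2) := by
  match k with
  | 0 => simp [Nat.descFactorial]
  | 1 => simp [Nat.descFactorial]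
  | 2 => norm_num [Nat.descFactorial]
  | (n+3) => simp [Nat.descFactorial]; push_cast; ring
lemma castD4 (k : ℕ) : (k.descFactorial 4 : ℝ) = k * (k - 1) * (k - 2) * (k - 3) := by
  match k with
  | 0 => simp [Nat.descFactorial]
  | 1 => simp [Nat.descFactorial]
  | 2 => norm_num [Nat.descFactorial]
  | 3 => norm_num [Nat.descFactorial]
  | (n+4) => simp [Nat.descFactorial]; push_cast; ring

lemma hasSum_poisson_pow1 (r : ℝ≥0) :
    HasSum (fun k : ℕ => (k : ℝ) * poissonPMFReal r k) (r : ℝ) := by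
  have := hasSum_poisson_desc r 1
  simpa [castD1] using this
lemma hasSum_poisson_pow2 (r : ℝ≥0) :
    HasSum (fun k : ℕ => (k : ℝ) ^ 2 * poissonPMFReal r k) ((r : ℝ) + (r:ℝ)^2) := by
  have := (hasSum_poisson_desc r 2).add (hasSum_poisson_desc r 1)
  have e : (fun k : ℕ => (k.descFactorial 2 : ℝ) * poissonPMFReal r k
      + (k.descFactorial 1 : ℝ) * poissonPMFReal r k)
      = fun k : ℕ => (k : ℝ) ^ 2 * poissonPMFReal r k := by
    funext k; rw [castD1, castD2]; ring
  rw [e] at this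
  simpa [add_comm] using this
lemma hasSum_poisson_pow3 (r : ℝ≥0) :
    HasSum (fun k : ℕ => (k : ℝ) ^ 3 * poissonPMFReal r k)
      ((r : ℝ) + 3*(r:ℝ)^2 + (r:ℝ)^3) := by
  have := ((hasSum_poisson_desc r 3).add ((hasSum_poisson_desc r 2).mul_left 3)).add
    (hasSum_poisson_desc r 1)
  have e : (fun k : ℕ => ((k.descFactorial 3 : ℝ) * poissonPMFReal r k
      + 3 * ((k.descFactorial 2 : ℝ) * poissonPMFReal r k))
      + (k.descFactorial 1 : ℝ) * poissonPMFReal r k)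
      = fun k : ℕ => (k : ℝ) ^ 3 * poissonPMFReal r k := by
    funext k; rw [castD1, castD2, castD3]; ring
  rw [e] at this
  convert this using 1; ring
lemma hasSum_poisson_pow4 (r : ℝ≥0) :
    HasSum (fun k : ℕ => (k : ℝ) ^ 4 * poissonPMFReal r k)
      ((r : ℝ) + 7*(r:ℝ)^2 + 6*(r:ℝ)^3 + (r:ℝ)^4) := by
  have := (((hasSum_poisson_desc r 4).add ((hasSum_poisson_desc r 3).mul_left 6)).add
    ((hasSum_poisson_desc r 2).mul_left 7)).add (hasSum_poisson_desc r 1)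
  have e : (fun k : ℕ => (((k.descFactorial 4 : ℝ) * poissonPMFReal r k
      + 6 * ((k.descFactorial 3 : ℝ) * poissonPMFReal r k))
      + 7 * ((k.descFactorial 2 : ℝ) * poissonPMFReal r k))
      + (k.descFactorial 1 : ℝ) * poissonPMFReal r k)
      = fun k : ℕ => (k : ℝ) ^ 4 * poissonPMFReal r k := by
    funext k; rw [castD1, castD2, castD3, castD4]; ring
  rw [e] at this
  convert this using 1; ring

lemma integrable_poisson_pow1 (r : ℝ≥0) :
    Integrable (fun k : ℕ => (k : ℝ)) (poissonMeasure r) :=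
  integrable_poisson_of_hasSum (fun k => by positivity) (hasSum_poisson_pow1 r)
lemma integrable_poisson_pow2 (r : ℝ≥0) :
    Integrable (fun k : ℕ => (k : ℝ) ^ 2) (poissonMeasure r) :=
  integrable_poisson_of_hasSum (fun k => by positivity) (hasSum_poisson_pow2 r)
lemma integrable_poisson_pow3 (r : ℝ≥0) :
    Integrable (fun k : ℕ => (k : ℝ) ^ 3) (poissonMeasure r) :=
  integrable_poisson_of_hasSum (fun k => by positivity) (hasSum_poisson_pow3 r)
lemma integrable_poisson_pow4 (r : ℝ≥0) :
    Integrable (fun k : ℕ => (k : ℝ) ^ 4) (poissonMeasure r) :=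
  integrable_poisson_of_hasSum (fun k => by positivity) (hasSum_poisson_pow4 r)

lemma integral_poisson_pow1 (r : ℝ≥0) :
    ∫ k : ℕ, (k : ℝ) ∂(poissonMeasure r) = r :=
  integral_poisson_of_hasSum (fun k => by positivity) (hasSum_poisson_pow1 r)
lemma integral_poisson_pow2 (r : ℝ≥0) :
    ∫ k : ℕ, (k : ℝ) ^ 2 ∂(poissonMeasure r) = (r : ℝ) + (r:ℝ)^2 :=
  integral_poisson_of_hasSum (fun k => by positivity) (hasSum_poisson_pow2 r)
lemma integral_poisson_pow3 (r : ℝ≥0) :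
    ∫ k : ℕ, (k : ℝ) ^ 3 ∂(poissonMeasure r) = (r : ℝ) + 3*(r:ℝ)^2 + (r:ℝ)^3 :=
  integral_poisson_of_hasSum (fun k => by positivity) (hasSum_poisson_pow3 r)
lemma integral_poisson_pow4 (r : ℝ≥0) :
    ∫ k : ℕ, (k : ℝ) ^ 4 ∂(poissonMeasure r) = (r : ℝ) + 7*(r:ℝ)^2 + 6*(r:ℝ)^3 + (r:ℝ)^4 :=
  integral_poisson_of_hasSum (fun k => by positivity) (hasSum_poisson_pow4 r)

lemma hasSum_poisson_sq (r : ℝ≥0) (a : ℝ) :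
    HasSum (fun k : ℕ => ((k : ℝ) - a) ^ 2 * poissonPMFReal r k)
      ((r : ℝ) + ((r : ℝ) - a) ^ 2) := by
  have := ((hasSum_poisson_pow2 r).add ((hasSum_poisson_pow1 r).mul_left (-2*a))).add
    ((poissonPMFRealSum r).mul_left (a^2))
  have e : (fun k : ℕ => ((k : ℝ)^2 * poissonPMFReal r k
      + (-2*a) * ((k:ℝ) * poissonPMFReal r k)) + a^2 * poissonPMFReal r k)
      = fun k : ℕ => ((k : ℝ) - a) ^ 2 * poissonPMFReal r k := by
    funext k; ring
  simp only [← poissonPMFReal.eq_1] at this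
  rw [e] at this
  convert this using 1; ring

lemma hasSum_poisson_quartic (r : ℝ≥0) (a : ℝ) :
    HasSum (fun k : ℕ => ((k : ℝ) - a) ^ 4 * poissonPMFReal r k)
      (((r:ℝ) + 7*(r:ℝ)^2 + 6*(r:ℝ)^3 + (r:ℝ)^4) - 4*a*((r:ℝ) + 3*(r:ℝ)^2 + (r:ℝ)^3)
        + 6*a^2*((r:ℝ) + (r:ℝ)^2) - 4*a^3*(r:ℝ) + a^4) := by
  have := ((((hasSum_poisson_pow4 r).add ((hasSum_poisson_pow3 r).mul_left (-4*a))).add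
    ((hasSum_poisson_pow2 r).mul_left (6*a^2))).add
    ((hasSum_poisson_pow1 r).mul_left (-4*a^3))).add ((poissonPMFRealSum r).mul_left (a^4))
  have e : (fun k : ℕ => ((((k : ℝ)^4 * poissonPMFReal r k
      + (-4*a) * ((k:ℝ)^3 * poissonPMFReal r k)) + (6*a^2) * ((k:ℝ)^2 * poissonPMFReal r k))
      + (-4*a^3) * ((k:ℝ) * poissonPMFReal r k)) + a^4 * poissonPMFReal r k)
      = fun k : ℕ => ((k : ℝ) - a) ^ 4 * poissonPMFReal r k := by
    funext k; ring
  simp only [← poissonPMFReal.eq_1] at this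
  rw [e] at this
  convert this using 1; ring

lemma integral_poisson_sq (r : ℝ≥0) (a : ℝ) :
    ∫ k : ℕ, ((k : ℝ) - a) ^ 2 ∂(poissonMeasure r) = (r : ℝ) + ((r : ℝ) - a) ^ 2 :=
  integral_poisson_of_hasSum (fun k => by positivity) (hasSum_poisson_sq r a)

lemma integral_poisson_quartic (r : ℝ≥0) (a : ℝ) :
    ∫ k : ℕ, ((k : ℝ) - a) ^ 4 ∂(poissonMeasure r)
      = (((r:ℝ) + 7*(r:ℝ)^2 + 6*(r:ℝ)^3 + (r:ℝ)^4) - 4*a*((r:ℝ) + 3*(r:ℝ)^2 + (r:ℝ)^3)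
        + 6*a^2*((r:ℝ) + (r:ℝ)^2) - 4*a^3*(r:ℝ) + a^4) :=
  integral_poisson_of_hasSum (fun k => by positivity) (hasSum_poisson_quartic r a)

lemma memℒp_poisson_sq (r : ℝ≥0) (a : ℝ) :
    MemLp (fun k : ℕ => ((k : ℝ) - a) ^ 2) 2 (poissonMeasure r) := by
  rw [memLp_two_iff_integrable_sq (measurable_from_top.aestronglyMeasurable)]
  have := integrable_poisson_of_hasSum (f := fun k : ℕ => ((k : ℝ) - a) ^ 4)
    (fun k => by positivity) (hasSum_poisson_quartic r a)
  convert this using 2 with k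
  · rfl
  ring

section Transfer
variable {Ω : Type} [MeasurableSpace Ω] {μ : Measure Ω} [IsProbabilityMeasure μ]
  {X : Ω → ℕ} (hX : Measurable X) {r : ℝ≥0} (h : Measure.map X μ = poissonMeasure r) (a : ℝ)

include hX h

lemma memℒp_comp_poisson_sq : MemLp (fun ω => ((X ω : ℝ) - a) ^ 2) 2 μ := by
  have := (memLp_map_measure_iff (f := X) (g := fun k : ℕ => ((k : ℝ) - a) ^ 2)
    (by rw [h]; exact measurable_from_top.aestronglyMeasurable) hX.aemeasurable).mp
    (by rw [h]; exact memℒp_poisson_sq r a)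
  exact this

lemma integral_comp_poisson_sq :
    ∫ ω, ((X ω : ℝ) - a) ^ 2 ∂μ = (r : ℝ) + ((r : ℝ) - a) ^ 2 := by
  have e : ∫ ω, ((X ω : ℝ) - a) ^ 2 ∂μ
      = ∫ k, ((k : ℝ) - a) ^ 2 ∂(Measure.map X μ) := by
    rw [integral_map hX.aemeasurable]
    · exact (measurable_from_top.aestronglyMeasurable)
  rw [e, h, integral_poisson_sq]

lemma integral_comp_poisson_quartic :
    ∫ ω, ((X ω : ℝ) - a) ^ 4 ∂μ
      = (((r:ℝ) + 7*(r:ℝ)^2 + 6*(r:ℝ)^3 + (r:ℝ)^4) - 4*a*((r:ℝ) + 3*(r:ℝ)^2 + (r:ℝ)^3)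
        + 6*a^2*((r:ℝ) + (r:ℝ)^2) - 4*a^3*(r:ℝ) + a^4) := by
  have e : ∫ ω, ((X ω : ℝ) - a) ^ 4 ∂μ
      = ∫ k, ((k : ℝ) - a) ^ 4 ∂(Measure.map X μ) := by
    rw [integral_map hX.aemeasurable]
    · exact (measurable_from_top.aestronglyMeasurable)
  rw [e, h, integral_poisson_quartic]

lemma variance_comp_poisson_sq :
    variance (fun ω => ((X ω : ℝ) - a) ^ 2) μ
      = (r:ℝ) + 2*(r:ℝ)^2 + 4*((r:ℝ)-a)*(r:ℝ) + 4*((r:ℝ)-a)^2*(r:ℝ) := by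
  rw [variance_eq_sub (memℒp_comp_poisson_sq hX h a)]
  have e2 : ∫ ω, ((fun ω => ((X ω : ℝ) - a) ^ 2) ^ 2) ω ∂μ
      = ∫ ω, ((X ω : ℝ) - a) ^ 4 ∂μ := by
    congr 1; funext ω; simp [Pi.pow_apply]; ring
  rw [show ((fun ω => ((X ω : ℝ) - a) ^ 2) ^ 2) = fun ω => ((X ω : ℝ) - a) ^ 4 by
      funext ω; simp [Pi.pow_apply]; ring]
  rw [integral_comp_poisson_quartic hX h a, integral_comp_poisson_sq hX h a]
  ring

end Transfer

private lemma final_poly (s ε en Q D SQ SD SN A1 A2 A3 t : ℝ)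
    (hε : 0 < ε) (hn0 : 0 < en) (hs0 : 0 < s)
    (hQ0 : 0 ≤ Q) (hD0 : 0 ≤ D) (hSQ0 : 0 ≤ SQ) (hSD0 : 0 ≤ SD) (hSN0 : 0 < SN)
    (hQs : SQ ^ 2 = Q) (hDs : SD ^ 2 = D) (hns : SN ^ 2 = en)
    (key1 : 25600 ^ 3 * en ^ 2 ≤ s ^ 3 * ε ^ 4)
    (key2 : 25600 * en * SQ ≤ s * ε ^ 2)
    (key3 : 12800 * en * SN * SQ ≤ s ^ 2 * ε ^ 3)
    (hA1 : A1 ≤ 1) (hA2 : A2 ≤ SQ * SD) (hA3 : A3 ≤ SQ * SD ^ 2)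
    (htdef : t = s ^ 2 * D / 4 + s ^ 2 * ε ^ 2 / (4 * en)) :
    s * A1 + 2 * s ^ 2 * Q + 4 * s ^ 2 * A2 + 4 * s ^ 3 * A3 ≤ 0.01 * t ^ 2 := by
  have hb0 : 0 ≤ s ^ 2 * ε ^ 2 / (4 * en) := by positivity
  have ha0 : 0 ≤ s ^ 2 * D / 4 := by positivity
  have htb : s ^ 2 * ε ^ 2 / (4 * en) ≤ t := by rw [htdef]; linarith
  have hta : s ^ 2 * D / 4 ≤ t := by rw [htdef]; linarith
  have ht0 : 0 ≤ t := le_trans hb0 htb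
  have htg0 : 0 ≤ s ^ 2 * ε * SD / (2 * SN) := by positivity
  have htg : s ^ 2 * ε * SD / (2 * SN) ≤ t := by
    have hdiff : t - s ^ 2 * ε * SD / (2 * SN) = s ^ 2 * (SD * SN - ε) ^ 2 / (4 * SN ^ 2) := by
      rw [htdef, ← hns, ← hDs]
      field_simp
      ring
    have hpos : 0 ≤ s ^ 2 * (SD * SN - ε) ^ 2 / (4 * SN ^ 2) := by positivity
    linarith
  have hbb : (s ^ 2 * ε ^ 2 / (4 * en)) ^ 2 ≤ t ^ 2 := pow_le_pow_left₀ hb0 htb 2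
  have hab : (s ^ 2 * D / 4) * (s ^ 2 * ε ^ 2 / (4 * en)) ≤ t * t :=
    mul_le_mul hta htb hb0 ht0
  have hgb : (s ^ 2 * ε ^ 2 / (4 * en)) * (s ^ 2 * ε * SD / (2 * SN)) ≤ t * t :=
    mul_le_mul htb htg htg0 ht0
  have c1 : s ≤ 0.0025 * t ^ 2 := by
    have hcore : s ≤ 0.0025 * ((s ^ 2 * ε ^ 2 / (4 * en)) ^ 2) := by
      rw [div_pow, ← mul_div_assoc, le_div_iff₀ (by positivity)]
      have h := mul_le_mul_of_nonneg_left key1 hs0.le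
      have h2 : 0 ≤ s * en ^ 2 := by positivity
      linarith [h, h2]
    linarith [hbb]
  have c2 : 2 * s ^ 2 * Q ≤ 0.0025 * t ^ 2 := by
    have hcore : 2 * s ^ 2 * Q ≤ 0.0025 * ((s ^ 2 * ε ^ 2 / (4 * en)) ^ 2) := by
      rw [div_pow, ← mul_div_assoc, le_div_iff₀ (by positivity), ← hQs]
      have hk := mul_le_mul key2 key2 (by positivity) (by positivity)
      have h := mul_le_mul_of_nonneg_left hk (sq_nonneg s)
      have h2 : 0 ≤ s ^ 2 * en ^ 2 * SQ ^ 2 := by positivity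
      linarith [h, h2]
    linarith [hbb]
  have c3 : 4 * s ^ 3 * (SQ * SD ^ 2) ≤ 0.0025 * t ^ 2 := by
    have hcore : 4 * s ^ 3 * (SQ * SD ^ 2)
        ≤ 0.0025 * ((s ^ 2 * D / 4) * (s ^ 2 * ε ^ 2 / (4 * en))) := by
      rw [div_mul_div_comm, ← mul_div_assoc, le_div_iff₀ (by positivity), ← hDs]
      have h := mul_le_mul_of_nonneg_left key2
        (by positivity : (0:ℝ) ≤ 0.0025 * s ^ 3 * SD ^ 2)
      linarith [h]
    linarith [hab]
  have c4 : 4 * s ^ 2 * (SQ * SD) ≤ 0.0025 * t ^ 2 := by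
    have hcore : 4 * s ^ 2 * (SQ * SD)
        ≤ 0.0025 * ((s ^ 2 * ε ^ 2 / (4 * en)) * (s ^ 2 * ε * SD / (2 * SN))) := by
      rw [div_mul_div_comm, ← mul_div_assoc, le_div_iff₀ (by positivity)]
      have h := mul_le_mul_of_nonneg_left key3
        (by positivity : (0:ℝ) ≤ 0.0025 * s ^ 2 * SD)
      linarith [h]
    linarith [hgb]
  have g1 : s * A1 ≤ s * 1 := mul_le_mul_of_nonneg_left hA1 hs0.le
  have g2 : 4 * s ^ 2 * A2 ≤ 4 * s ^ 2 * (SQ * SD) :=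
    mul_le_mul_of_nonneg_left hA2 (by positivity)
  have g3 : 4 * s ^ 3 * A3 ≤ 4 * s ^ 3 * (SQ * SD ^ 2) :=
    mul_le_mul_of_nonneg_left hA3 (by positivity)
  linarith


set_option maxHeartbeats 1000000 in
/-- Concentration of the light-element estimator when `v` is close to `p`: there is an
absolute constant `C` such that if `‖p_L - v_L‖₂ ≤ ε/(2√n)` and
`s ≥ C max (n ‖p_L‖₂ / ε²) (n^(2/3) / ε^(4/3))`, then for
`Z₁ = ∑_{i ∈ L} (X i - s v i)²` and `t = s² ‖p_L - v_L‖₂²/4 + s² ε²/(4n)`,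
`P(|Z₁ - E[Z₁]| ≥ t) ≤ 0.01`. -/
theorem light_concentration_close :
    ∃ C : ℝ,
      ∀ n : ℕ, 0 < n → ∀ p v : Fin n → ℝ, IsDist p → IsDist v →
      ∀ L : Finset (Fin n), ∀ ε : ℝ, 0 < ε → ε ≤ 1 →
      Real.sqrt (∑ i ∈ L, (p i - v i) ^ 2) ≤ ε / (2 * Real.sqrt n) →
      ∀ s : ℝ,
        C * max ((n : ℝ) * Real.sqrt (∑ i ∈ L, (p i) ^ 2) / ε ^ 2)
            ((n : ℝ) ^ ((2 : ℝ) / 3) / ε ^ ((4 : ℝ) / 3)) ≤ s →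
      ∀ (Ω : Type) (_ : MeasurableSpace Ω) (μ : Measure Ω), IsProbabilityMeasure μ →
      ∀ X : Fin n → Ω → ℕ, (∀ i, Measurable (X i)) →
        iIndepFun X μ →
        (∀ i, Measure.map (X i) μ = poissonMeasure (Real.toNNReal (s * p i))) →
        (μ {ω | s ^ 2 * (∑ i ∈ L, (p i - v i) ^ 2) / 4 + s ^ 2 * ε ^ 2 / (4 * n) ≤
              |(∑ i ∈ L, ((X i ω : ℝ) - s * v i) ^ 2) -
                ∫ ω', (∑ i ∈ L, ((X i ω' : ℝ) - s * v i) ^ 2) ∂μ|}).toReal ≤ 0.01 := by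
  use 25600
  intro n hn p v hp hv L ε hε hε1 hclose s hsC Ω mΩ μ hμ X hXm hindep hmap
  -- basic positivity facts
  have hn1 : (1 : ℝ) ≤ n := by exact_mod_cast hn
  have hn0 : (0 : ℝ) < n := by linarith
  set D : ℝ := ∑ i ∈ L, (p i - v i) ^ 2 with hD
  set Q : ℝ := ∑ i ∈ L, (p i) ^ 2 with hQ
  have hD0 : 0 ≤ D := Finset.sum_nonneg fun i _ => sq_nonneg _
  have hQ0 : 0 ≤ Q := Finset.sum_nonneg fun i _ => sq_nonneg _
  have hmax2 : 0 < (n : ℝ) ^ ((2 : ℝ) / 3) / ε ^ ((4 : ℝ) / 3) := by positivity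
  have hmr := le_max_right ((n : ℝ) * Real.sqrt Q / ε ^ 2)
    ((n : ℝ) ^ ((2 : ℝ) / 3) / ε ^ ((4 : ℝ) / 3))
  have hml := le_max_left ((n : ℝ) * Real.sqrt Q / ε ^ 2)
    ((n : ℝ) ^ ((2 : ℝ) / 3) / ε ^ ((4 : ℝ) / 3))
  have hs2 : 25600 * ((n : ℝ) ^ ((2 : ℝ) / 3) / ε ^ ((4 : ℝ) / 3)) ≤ s :=
    le_trans (mul_le_mul_of_nonneg_left hmr (by norm_num)) hsC
  have hs1 : 25600 * ((n : ℝ) * Real.sqrt Q / ε ^ 2) ≤ s :=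
    le_trans (mul_le_mul_of_nonneg_left hml (by norm_num)) hsC
  have hs0 : 0 < s := lt_of_lt_of_le (by positivity) hs2
  -- the random variables
  set W : Fin n → Ω → ℝ := fun i ω => ((X i ω : ℝ) - s * v i) ^ 2 with hW
  have hr : ∀ i, ((Real.toNNReal (s * p i) : ℝ≥0) : ℝ) = s * p i := by
    intro i
    exact Real.coe_toNNReal _ (mul_nonneg hs0.le (hp.1 i))
  have hWmem : ∀ i, MemLp (W i) 2 μ := fun i =>
    memℒp_comp_poisson_sq (hXm i) (hmap i) (s * v i)
  have hWvar : ∀ i, variance (W i) μ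
      = s * p i + 2*(s * p i)^2 + 4*(s*(p i - v i))*(s * p i)
        + 4*(s*(p i - v i))^2*(s * p i) := by
    intro i
    rw [hW]
    have := variance_comp_poisson_sq (hXm i) (hmap i) (s * v i)
    rw [hr i] at this
    rw [this]; ring
  set Z : Ω → ℝ := fun ω => ∑ i ∈ L, ((X i ω : ℝ) - s * v i) ^ 2 with hZ
  have hZeq : Z = ∑ i ∈ L, W i := by
    funext ω; rw [hZ, Finset.sum_apply]
  have hZmem : MemLp Z 2 μ := by
    rw [hZeq]; exact memLp_finset_sum' _ (fun i _ => hWmem i)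
  have hvar : variance Z μ = ∑ i ∈ L, variance (W i) μ := by
    rw [hZeq]
    refine IndepFun.variance_sum (fun i _ => hWmem i) ?_
    intro i _ j _ hij
    exact (hindep.indepFun hij).comp
      (measurable_from_top : Measurable (fun k : ℕ => ((k : ℝ) - s * v i) ^ 2))
      (measurable_from_top : Measurable (fun k : ℕ => ((k : ℝ) - s * v j) ^ 2))
  set t : ℝ := s ^ 2 * D / 4 + s ^ 2 * ε ^ 2 / (4 * n) with htdef
  have htb : s ^ 2 * ε ^ 2 / (4 * n) ≤ t := by
    rw [htdef]; exact le_add_of_nonneg_left (by positivity)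
  have htb0 : 0 < s ^ 2 * ε ^ 2 / (4 * n) := by positivity
  have ht0 : 0 < t := lt_of_lt_of_le htb0 htb
  -- Chebyshev
  have hcheb := meas_ge_le_variance_div_sq (μ := μ) hZmem ht0
  -- final analytic bound
  have hfinal : variance Z μ / t ^ 2 ≤ 0.01 := by
    set SQ := Real.sqrt Q with hSQ
    set SD := Real.sqrt D with hSD
    set SN := Real.sqrt (n : ℝ) with hSN
    have hSQ0 : 0 ≤ SQ := Real.sqrt_nonneg _
    have hSD0 : 0 ≤ SD := Real.sqrt_nonneg _
    have hSN0 : 0 < SN := Real.sqrt_pos.mpr hn0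
    have hQs : SQ ^ 2 = Q := Real.sq_sqrt hQ0
    have hDs : SD ^ 2 = D := Real.sq_sqrt hD0
    have hns : SN ^ 2 = (n : ℝ) := Real.sq_sqrt hn0.le
    have key2 : 25600 * (n : ℝ) * SQ ≤ s * ε ^ 2 := by
      have h := mul_le_mul_of_nonneg_right hs1 (le_of_lt (pow_pos hε 2))
      calc 25600 * (n : ℝ) * SQ = 25600 * ((n : ℝ) * SQ / ε ^ 2) * ε ^ 2 := by
            field_simp
        _ ≤ s * ε ^ 2 := h
    have key2' : 25600 * (n : ℝ) ^ ((2 : ℝ) / 3) ≤ s * ε ^ ((4 : ℝ) / 3) := by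
      have hw : 0 < ε ^ ((4 : ℝ) / 3) := Real.rpow_pos_of_pos hε _
      have h := mul_le_mul_of_nonneg_right hs2 hw.le
      calc 25600 * (n : ℝ) ^ ((2 : ℝ) / 3)
          = 25600 * ((n : ℝ) ^ ((2 : ℝ) / 3) / ε ^ ((4 : ℝ) / 3)) * ε ^ ((4 : ℝ) / 3) := by
            field_simp
        _ ≤ s * ε ^ ((4 : ℝ) / 3) := h
    have hu3 : ((n : ℝ) ^ ((2 : ℝ) / 3)) ^ (3 : ℕ) = (n : ℝ) ^ 2 := by
      rw [← Real.rpow_natCast ((n : ℝ) ^ ((2 : ℝ) / 3)) 3, ← Real.rpow_mul hn0.le,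
        ← Real.rpow_natCast (n : ℝ) 2]
      norm_num
    have hw3 : (ε ^ ((4 : ℝ) / 3)) ^ (3 : ℕ) = ε ^ 4 := by
      rw [← Real.rpow_natCast (ε ^ ((4 : ℝ) / 3)) 3, ← Real.rpow_mul hε.le,
        ← Real.rpow_natCast ε 4]
      norm_num
    have key1 : 25600 ^ 3 * (n : ℝ) ^ 2 ≤ s ^ 3 * ε ^ 4 := by
      have h3 := pow_le_pow_left₀ (by positivity) key2' 3
      rw [mul_pow, mul_pow, hu3, hw3] at h3
      exact h3
    have hwe : ε ^ ((4 : ℝ) / 3) ≤ ε := by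
      calc ε ^ ((4 : ℝ) / 3) ≤ ε ^ (1 : ℝ) :=
            Real.rpow_le_rpow_of_exponent_ge hε hε1 (by norm_num)
        _ = ε := Real.rpow_one ε
    have hSNu : SN ≤ (n : ℝ) ^ ((2 : ℝ) / 3) := by
      rw [hSN, Real.sqrt_eq_rpow]
      exact Real.rpow_le_rpow_of_exponent_le hn1 (by norm_num)
    have keyB : 25600 * SN ≤ s * ε := by
      calc 25600 * SN ≤ 25600 * (n : ℝ) ^ ((2 : ℝ) / 3) :=
            mul_le_mul_of_nonneg_left hSNu (by norm_num)
        _ ≤ s * ε ^ ((4 : ℝ) / 3) := key2'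
        _ ≤ s * ε := mul_le_mul_of_nonneg_left hwe hs0.le
    have key3 : 12800 * (n : ℝ) * SN * SQ ≤ s ^ 2 * ε ^ 3 := by
      have hm := mul_le_mul key2 keyB (by positivity) (by positivity)
      have hx : 0 ≤ (n : ℝ) * SN * SQ := by positivity
      calc 12800 * (n : ℝ) * SN * SQ = 12800 * ((n : ℝ) * SN * SQ) := by ring
        _ ≤ 655360000 * ((n : ℝ) * SN * SQ) := mul_le_mul_of_nonneg_right (by norm_num) hx
        _ = (25600 * (n : ℝ) * SQ) * (25600 * SN) := by ring
        _ ≤ (s * ε ^ 2) * (s * ε) := hm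
        _ = s ^ 2 * ε ^ 3 := by ring
    rw [div_le_iff₀ (by positivity), hvar]
    have hsum : ∑ i ∈ L, variance (W i) μ
        = s * (∑ i ∈ L, p i) + 2 * s ^ 2 * Q
          + 4 * s ^ 2 * (∑ i ∈ L, p i * (p i - v i))
          + 4 * s ^ 3 * (∑ i ∈ L, p i * (p i - v i) ^ 2) := by
      rw [Finset.sum_congr rfl (fun i _ => hWvar i), hQ, Finset.mul_sum, Finset.mul_sum,
        Finset.mul_sum, Finset.mul_sum, ← Finset.sum_add_distrib, ← Finset.sum_add_distrib,
        ← Finset.sum_add_distrib]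
      exact Finset.sum_congr rfl (fun i _ => by ring)
    rw [hsum]
    have hA1 : ∑ i ∈ L, p i ≤ 1 := by
      rw [← hp.2]
      exact Finset.sum_le_sum_of_subset_of_nonneg (Finset.subset_univ L)
        (fun i _ _ => hp.1 i)
    have hcs2 : (∑ i ∈ L, p i * (p i - v i)) ^ 2 ≤ Q * D := by
      have h := Finset.sum_mul_sq_le_sq_mul_sq L p (fun i => p i - v i)
      rw [hQ, hD]
      exact h
    have hA2 : ∑ i ∈ L, p i * (p i - v i) ≤ SQ * SD := by
      have h1 : ∑ i ∈ L, p i * (p i - v i) ≤ |∑ i ∈ L, p i * (p i - v i)| := le_abs_self _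
      have h2 : |∑ i ∈ L, p i * (p i - v i)| = Real.sqrt ((∑ i ∈ L, p i * (p i - v i)) ^ 2) :=
        (Real.sqrt_sq_eq_abs _).symm
      have h3 : Real.sqrt ((∑ i ∈ L, p i * (p i - v i)) ^ 2) ≤ Real.sqrt (Q * D) :=
        Real.sqrt_le_sqrt hcs2
      rw [Real.sqrt_mul hQ0] at h3
      rw [h2] at h1
      exact le_trans h1 h3
    have hd4 : ∑ i ∈ L, ((p i - v i) ^ 2) ^ 2 ≤ D ^ 2 := by
      have hle : ∀ i ∈ L, ((p i - v i) ^ 2) ^ 2 ≤ (p i - v i) ^ 2 * D := by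
        intro i hi
        have h := Finset.single_le_sum (f := fun j => (p j - v j) ^ 2)
          (fun j _ => sq_nonneg _) hi
        calc ((p i - v i) ^ 2) ^ 2 = (p i - v i) ^ 2 * (p i - v i) ^ 2 := by ring
          _ ≤ (p i - v i) ^ 2 * D := mul_le_mul_of_nonneg_left h (sq_nonneg _)
      calc ∑ i ∈ L, ((p i - v i) ^ 2) ^ 2 ≤ ∑ i ∈ L, (p i - v i) ^ 2 * D :=
            Finset.sum_le_sum hle
        _ = D * D := by rw [← Finset.sum_mul, ← hD]
        _ = D ^ 2 := by ring
    have hcs3 : (∑ i ∈ L, p i * (p i - v i) ^ 2) ^ 2 ≤ Q * D ^ 2 := by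
      have h := Finset.sum_mul_sq_le_sq_mul_sq L p (fun i => (p i - v i) ^ 2)
      rw [hQ]
      exact le_trans h (mul_le_mul_of_nonneg_left hd4 hQ0)
    have hA3 : ∑ i ∈ L, p i * (p i - v i) ^ 2 ≤ SQ * SD ^ 2 := by
      have h1 : ∑ i ∈ L, p i * (p i - v i) ^ 2 ≤ |∑ i ∈ L, p i * (p i - v i) ^ 2| :=
        le_abs_self _
      have h2 : |∑ i ∈ L, p i * (p i - v i) ^ 2|
          = Real.sqrt ((∑ i ∈ L, p i * (p i - v i) ^ 2) ^ 2) := (Real.sqrt_sq_eq_abs _).symm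
      have h3 : Real.sqrt ((∑ i ∈ L, p i * (p i - v i) ^ 2) ^ 2) ≤ Real.sqrt (Q * D ^ 2) :=
        Real.sqrt_le_sqrt hcs3
      rw [Real.sqrt_mul hQ0, Real.sqrt_sq hD0, ← hDs] at h3
      rw [h2] at h1
      exact le_trans h1 h3
    exact final_poly s ε (n : ℝ) Q D SQ SD SN _ _ _ t hε hn0 hs0 hQ0 hD0 hSQ0 hSD0 hSN0
      hQs hDs hns key1 key2 key3 hA1 hA2 hA3 htdef
  calc (μ {ω | t ≤ |Z ω - μ[Z]|}).toReal
      ≤ (ENNReal.ofReal (variance Z μ / t ^ 2)).toReal :=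
        ENNReal.toReal_mono ENNReal.ofReal_ne_top hcheb
    _ ≤ 0.01 := by
        rw [ENNReal.toReal_ofReal_eq_iff.mpr (div_nonneg (variance_nonneg _ _) (sq_nonneg _))]
        exact hfinal
end
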